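/- arXiv:2010.04130 — 4 statements merged into one kernel-verified Lean document; each statement's English description precedes it below -/
import Mathlib

section
/- Every hyponormal bounded operator T on a complex Hilbert space H can be written as T = S|T|, where S is an isometry on H. -/
noncomputable section

variable {H : Type*} [NormedAddCommGroup H] [InnerProductSpace ℂ H] [CompleteSpace H]

/-- The restriction of `T` to the subspace `M` attains its norm:
there is a unit vector `x ∈ M` with `‖T x‖ = sup {‖T y‖ : y ∈ M, ‖y‖ = 1}`. -/
def NormAttainingOn (T : H →L[ℂ] H) (M : Submodule ℂ H) : Prop :=
  ∃ x ∈ M, ‖x‖ = 1 ∧ ‖T x‖ = sSup {r : ℝ | ∃ y ∈ M, ‖y‖ = 1 ∧ r = ‖T y‖}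

/-- `T` is absolutely norm attaining (an `𝒜𝒩`-operator): its restriction to every
nonzero closed subspace attains its norm. -/
def IsANOperator (T : H →L[ℂ] H) : Prop :=
  ∀ M : Submodule ℂ H, IsClosed (M : Set H) → M ≠ ⊥ → NormAttainingOn T M

/-- The restriction of `T` to the subspace `M` attains its minimum modulus. -/
def MinAttainingOn (T : H →L[ℂ] H) (M : Submodule ℂ H) : Prop :=
  ∃ x ∈ M, ‖x‖ = 1 ∧ ‖T x‖ = sInf {r : ℝ | ∃ y ∈ M, ‖y‖ = 1 ∧ r = ‖T y‖}

/-- `T` is absolutely minimum attaining (an `𝒜ℳ`-operator). -/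
def IsAMOperator (T : H →L[ℂ] H) : Prop :=
  ∀ M : Submodule ℂ H, IsClosed (M : Set H) → M ≠ ⊥ → MinAttainingOn T M

/-- A Fredholm operator: closed range and finite dimensional kernel and co-kernel
(kernel of the adjoint). -/
def IsFredholmOp (T : H →L[ℂ] H) : Prop :=
  IsClosed (LinearMap.range (T : H →ₗ[ℂ] H) : Set H) ∧
    FiniteDimensional ℂ (LinearMap.ker (T : H →ₗ[ℂ] H)) ∧
    FiniteDimensional ℂ (LinearMap.ker ((ContinuousLinearMap.adjoint T : H →L[ℂ] H) : H →ₗ[ℂ] H))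

/-- The essential spectrum: the set of `z` such that `T - z I` is not Fredholm. -/
def essSpectrum (T : H →L[ℂ] H) : Set ℂ :=
  {z : ℂ | ¬ IsFredholmOp (T - z • (1 : H →L[ℂ] H))}

/-- The Fredholm index `dim N(T) - dim N(T*)`. -/
def fredholmIndex (T : H →L[ℂ] H) : ℤ :=
  (Module.finrank ℂ (LinearMap.ker (T : H →ₗ[ℂ] H)) : ℤ) -
    (Module.finrank ℂ (LinearMap.ker ((ContinuousLinearMap.adjoint T : H →L[ℂ] H) : H →ₗ[ℂ] H)) : ℤ)

/-- The Weyl spectrum: the set of `z` such that `T - z I` is not Fredholm of index `0`. -/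
def weylSpectrum (T : H →L[ℂ] H) : Set ℂ :=
  {z : ℂ | ¬ (IsFredholmOp (T - z • (1 : H →L[ℂ] H)) ∧
      fredholmIndex (T - z • (1 : H →L[ℂ] H)) = 0)}

/-- `T` is hyponormal: `T*T - TT* ≥ 0`. -/
def Hyponormal (T : H →L[ℂ] H) : Prop :=
  (ContinuousLinearMap.adjoint T * T - T * ContinuousLinearMap.adjoint T).IsPositive

/-- `T` is paranormal: `‖T x‖² ≤ ‖T² x‖ ‖x‖` for all `x`. -/
def Paranormal (T : H →L[ℂ] H) : Prop :=
  ∀ x : H, ‖T x‖ ^ 2 ≤ ‖T (T x)‖ * ‖x‖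

/-- `|T|`, the unique positive square root of `T*T`. -/
def opAbs (T : H →L[ℂ] H) : H →L[ℂ] H :=
  CFC.sqrt (ContinuousLinearMap.adjoint T * T)

/-- `π₀₀(T)`: the set of isolated eigenvalues of `T` of finite multiplicity. -/
def pi00 (T : H →L[ℂ] H) : Set ℂ :=
  {z : ℂ | z ∈ spectrum ℂ T ∧
    (∃ U : Set ℂ, IsOpen U ∧ U ∩ spectrum ℂ T = {z}) ∧
    LinearMap.ker ((T - z • (1 : H →L[ℂ] H) : H →L[ℂ] H) : H →ₗ[ℂ] H) ≠ ⊥ ∧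
    FiniteDimensional ℂ (LinearMap.ker ((T - z • (1 : H →L[ℂ] H) : H →L[ℂ] H) : H →ₗ[ℂ] H))}

set_option synthInstance.maxHeartbeats 1000000
set_option maxHeartbeats 1600000

namespace HypoAux

open ContinuousLinearMap

variable (T : H →L[ℂ] H)

lemma pos_aTa : 0 ≤ adjoint T * T := by
  rw [ContinuousLinearMap.nonneg_iff_isPositive]
  exact ContinuousLinearMap.isPositive_adjoint_comp_self T

lemma opAbs_sa : IsSelfAdjoint (opAbs T) :=
  IsSelfAdjoint.of_nonneg (CFC.sqrt_nonneg _)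

lemma opAbs_mul_self : opAbs T * opAbs T = adjoint T * T := by
  have := CFC.sq_sqrt (adjoint T * T) (pos_aTa T)
  simpa [sq, opAbs] using this

lemma inner_opAbs (x y : H) : (inner ℂ (opAbs T x) (opAbs T y) : ℂ) = inner ℂ (T x) (T y) := by
  have h1 : (inner ℂ (opAbs T x) (opAbs T y) : ℂ) = inner ℂ x ((opAbs T * opAbs T) y) :=
    calc (inner ℂ (opAbs T x) (opAbs T y) : ℂ)
        = inner ℂ (ContinuousLinearMap.adjoint (opAbs T) x) (opAbs T y) := by
          rw [(opAbs_sa T).adjoint_eq]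
      _ = inner ℂ x (opAbs T (opAbs T y)) := ContinuousLinearMap.adjoint_inner_left _ _ _
      _ = inner ℂ x ((opAbs T * opAbs T) y) := rfl
  rw [h1, opAbs_mul_self, ContinuousLinearMap.mul_apply,
    ContinuousLinearMap.adjoint_inner_right]

lemma norm_opAbs (x : H) : ‖opAbs T x‖ = ‖T x‖ := by
  have h := inner_opAbs T x x
  rw [inner_self_eq_norm_sq_to_K, inner_self_eq_norm_sq_to_K] at h
  have h' : (‖opAbs T x‖ : ℝ) ^ 2 = ‖T x‖ ^ 2 := by exact_mod_cast h
  have := congrArg Real.sqrt h'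
  simpa [Real.sqrt_sq (norm_nonneg _)] using this

open ContinuousLinearMap in
lemma T_eq_of_opAbs_eq {u v : H} (h : opAbs T u = opAbs T v) : T u = T v := by
  have h0 : ‖T (u - v)‖ = 0 := by
    rw [← norm_opAbs, map_sub, h, sub_self, norm_zero]
  have := norm_eq_zero.mp h0
  rw [map_sub, sub_eq_zero] at this
  exact this

def Esub : Submodule ℂ H := LinearMap.range (opAbs T : H →ₗ[ℂ] H)

def Dsub : Submodule ℂ H := (Esub T).topologicalClosure

def fIso : Esub T →ₗᵢ[ℂ] H where
  toLinearMap :=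
    { toFun := fun z => T (LinearMap.mem_range.mp z.2).choose
      map_add' := by
        intro a b
        have ha := (LinearMap.mem_range.mp a.2).choose_spec
        have hb := (LinearMap.mem_range.mp b.2).choose_spec
        have hab := (LinearMap.mem_range.mp (a + b).2).choose_spec
        have h : opAbs T (LinearMap.mem_range.mp (a + b).2).choose =
            opAbs T ((LinearMap.mem_range.mp a.2).choose + (LinearMap.mem_range.mp b.2).choose) := by
          simp only [ContinuousLinearMap.coe_coe] at ha hb hab
          rw [hab, map_add, ha, hb, Submodule.coe_add]
        show T (LinearMap.mem_range.mp (a + b).2).choose =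
          T (LinearMap.mem_range.mp a.2).choose + T (LinearMap.mem_range.mp b.2).choose
        rw [T_eq_of_opAbs_eq T h, map_add]
      map_smul' := by
        intro c a
        have ha := (LinearMap.mem_range.mp a.2).choose_spec
        have hca := (LinearMap.mem_range.mp (c • a).2).choose_spec
        have h : opAbs T (LinearMap.mem_range.mp (c • a).2).choose =
            opAbs T (c • (LinearMap.mem_range.mp a.2).choose) := by
          simp only [ContinuousLinearMap.coe_coe] at ha hca
          rw [hca, map_smul, ha, Submodule.coe_smul]
        show T (LinearMap.mem_range.mp (c • a).2).choose =
          (RingHom.id ℂ) c • T (LinearMap.mem_range.mp a.2).choose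
        rw [T_eq_of_opAbs_eq T h, map_smul]
        rfl }
  norm_map' := by
    intro z
    have hz := (LinearMap.mem_range.mp z.2).choose_spec
    show ‖T (LinearMap.mem_range.mp z.2).choose‖ = ‖z‖
    simp only [ContinuousLinearMap.coe_coe] at hz
    rw [← norm_opAbs, hz, Submodule.coe_norm]

lemma fIso_eq {z : Esub T} {y : H} (hy : opAbs T y = ↑z) : fIso T z = T y :=
  T_eq_of_opAbs_eq T ((LinearMap.mem_range.mp z.2).choose_spec.trans hy.symm)

def eIso : Esub T →ₗᵢ[ℂ] Dsub T where
  toLinearMap := Submodule.inclusion (Submodule.le_topologicalClosure _)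
  norm_map' := fun z => by
    simp [Submodule.coe_norm, Submodule.coe_inclusion]
    rfl

lemma denseRange_eIso : DenseRange (eIso T) := by
  intro d
  rw [closure_subtype]
  have himg : Subtype.val '' (Set.range (eIso T)) = (Esub T : Set H) := by
    ext w
    constructor
    · rintro ⟨w', ⟨z, rfl⟩, rfl⟩
      exact z.2
    · intro hw
      exact ⟨eIso T ⟨w, hw⟩, ⟨⟨w, hw⟩, rfl⟩, rfl⟩
  rw [himg, ← Submodule.topologicalClosure_coe]
  exact d.2

instance : CompleteSpace (Dsub T) :=
  (Submodule.isClosed_topologicalClosure _).completeSpace_coe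

def extMap : Dsub T →L[ℂ] H :=
  (fIso T).toContinuousLinearMap.extend (eIso T).toContinuousLinearMap

lemma extMap_e (z : Esub T) : extMap T (eIso T z) = fIso T z := by
  simpa [extMap] using ContinuousLinearMap.extend_eq (f := (fIso T).toContinuousLinearMap)
    (e := (eIso T).toContinuousLinearMap) (by simpa using denseRange_eIso T)
    ((eIso T).isometry.isUniformInducing) z

lemma extMap_norm (d : Dsub T) : ‖extMap T d‖ = ‖d‖ := by
  refine DenseRange.induction_on (denseRange_eIso T) d
    (isClosed_eq (extMap T).continuous.norm continuous_norm) (fun z => ?_)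
  rw [extMap_e, (fIso T).norm_map, (eIso T).norm_map]

lemma inner_opAbs_symm (u v : H) :
    (inner ℂ (opAbs T u) v : ℂ) = inner ℂ u (opAbs T v) :=
  calc (inner ℂ (opAbs T u) v : ℂ)
      = inner ℂ (ContinuousLinearMap.adjoint (opAbs T) u) v := by rw [(opAbs_sa T).adjoint_eq]
    _ = inner ℂ u (opAbs T v) := ContinuousLinearMap.adjoint_inner_left _ _ _

lemma opAbs_eq_zero_iff (x : H) : opAbs T x = 0 ↔ T x = 0 := by
  rw [← norm_eq_zero (a := opAbs T x), norm_opAbs, norm_eq_zero]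

lemma orthogonal_Esub : (Esub T)ᗮ = LinearMap.ker (T : H →ₗ[ℂ] H) := by
  ext x
  rw [Submodule.mem_orthogonal, LinearMap.mem_ker]
  constructor
  · intro h
    have h1 : (inner ℂ (opAbs T (opAbs T x)) x : ℂ) = 0 := h _ ⟨opAbs T x, rfl⟩
    rw [inner_opAbs_symm] at h1
    exact (opAbs_eq_zero_iff T x).mp (inner_self_eq_zero.mp h1)
  · rintro hx u ⟨y, rfl⟩
    rw [ContinuousLinearMap.coe_coe, inner_opAbs_symm, (opAbs_eq_zero_iff T x).mpr hx, inner_zero_right]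

instance : CompleteSpace (LinearMap.ker (T : H →ₗ[ℂ] H)) :=
  (ContinuousLinearMap.isClosed_ker T).completeSpace_coe

lemma Dsub_eq : Dsub T = (LinearMap.ker (T : H →ₗ[ℂ] H))ᗮ := by
  rw [← orthogonal_Esub, Dsub, ← Submodule.orthogonal_orthogonal_eq_closure]

lemma orthogonal_Dsub : (Dsub T)ᗮ = LinearMap.ker (T : H →ₗ[ℂ] H) := by
  rw [Dsub_eq, Submodule.orthogonal_orthogonal]

end HypoAux


/-- Every hyponormal operator `T` factors as `T = S |T|` with `S` an isometry. -/
theorem hyponormal_eq_isometry_mul_abs (T : H →L[ℂ] H) (hhypo : Hyponormal T) :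
    ∃ S : H →L[ℂ] H, (∀ x : H, ‖S x‖ = ‖x‖) ∧ T = S * opAbs T := by
  have hpos : (ContinuousLinearMap.adjoint T * T - T * ContinuousLinearMap.adjoint T).IsPositive := hhypo
  clear hhypo
  have hhypo := hpos

  -- kernel inclusion
  have hTstar : ∀ x : H, T x = 0 → ContinuousLinearMap.adjoint T x = 0 := by
    intro x hx
    have h0 := hhypo.2 x
    rw [ContinuousLinearMap.reApplyInnerSelf_apply] at h0
    have hx2 : (ContinuousLinearMap.adjoint T * T - T * ContinuousLinearMap.adjoint T) x = ContinuousLinearMap.adjoint T (T x) - T (ContinuousLinearMap.adjoint T x) := rfl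
    have e1 : (inner ℂ (ContinuousLinearMap.adjoint T (T x)) x : ℂ) = inner ℂ (T x) (T x) := by
      rw [ContinuousLinearMap.adjoint_inner_left]
    have e2 : (inner ℂ (T (ContinuousLinearMap.adjoint T x)) x : ℂ) = inner ℂ (ContinuousLinearMap.adjoint T x) (ContinuousLinearMap.adjoint T x) :=
      (ContinuousLinearMap.adjoint_inner_right _ _ _).symm
    have hval : (inner ℂ ((ContinuousLinearMap.adjoint T * T - T * ContinuousLinearMap.adjoint T) x) x : ℂ) =
        0 - inner ℂ (ContinuousLinearMap.adjoint T x) (ContinuousLinearMap.adjoint T x) := by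
      rw [hx2, inner_sub_left, e1, e2, hx, inner_zero_left]
    rw [hval] at h0
    have hre : RCLike.re ((0 : ℂ) - inner ℂ (ContinuousLinearMap.adjoint T x) (ContinuousLinearMap.adjoint T x)) =
        - ‖ContinuousLinearMap.adjoint T x‖ ^ 2 := by
      rw [zero_sub, map_neg, inner_self_eq_norm_sq]
    rw [hre] at h0
    have h2 : ‖ContinuousLinearMap.adjoint T x‖ = 0 := by nlinarith [norm_nonneg (ContinuousLinearMap.adjoint T x)]
    exact norm_eq_zero.mp h2
  haveI : CompleteSpace (HypoAux.Dsub T) := (Submodule.isClosed_topologicalClosure _).completeSpace_coe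
  -- the isometry
  set P := Submodule.orthogonalProjection (HypoAux.Dsub T) with hP
  set Q := Submodule.orthogonalProjection (HypoAux.Dsub T)ᗮ with hQ
  set S : H →L[ℂ] H :=
    (HypoAux.extMap T).comp (Submodule.orthogonalProjection (HypoAux.Dsub T)) +
      ((HypoAux.Dsub T)ᗮ.subtypeL).comp (Submodule.orthogonalProjection (HypoAux.Dsub T)ᗮ) with hS
  have hSapply : ∀ x : H, S x = HypoAux.extMap T (P x) + ((Q x : H)) := fun x => rfl
  -- inner products of HypoAux.extMap values with kernel vectors vanish
  have hperp : ∀ k : H, T k = 0 → ∀ d : HypoAux.Dsub T, (inner ℂ k (HypoAux.extMap T d) : ℂ) = 0 := by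
    intro k hk
    have hk' : ContinuousLinearMap.adjoint T k = 0 := hTstar k hk
    have hz : ∀ z : HypoAux.Esub T, (inner ℂ k (HypoAux.extMap T (HypoAux.eIso T z)) : ℂ) = 0 := by
      intro z
      rw [HypoAux.extMap_e, HypoAux.fIso_eq T (LinearMap.mem_range.mp z.2).choose_spec,
        ← ContinuousLinearMap.adjoint_inner_left, hk', inner_zero_left]
    intro d
    refine DenseRange.induction_on (HypoAux.denseRange_eIso T) d
      (isClosed_eq (Continuous.inner continuous_const (HypoAux.extMap T).continuous) continuous_const) hz
  have hQker : ∀ x : H, T ((Q x : H)) = 0 := by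
    intro x
    have h := (Q x).2
    exact LinearMap.mem_ker.mp ((SetLike.ext_iff.mp (HypoAux.orthogonal_Dsub T) _).mp h)
  have hiso : ∀ x : H, ‖S x‖ = ‖x‖ := by
    intro x
    have hdec : ((P x : H)) + ((Q x : H)) = x :=
      Submodule.starProjection_add_starProjection_orthogonal (K := HypoAux.Dsub T) x
    have ho1 : (inner ℂ (HypoAux.extMap T (P x)) ((Q x : H)) : ℂ) = 0 :=
      inner_eq_zero_symm.mp (hperp _ (hQker x) _)
    have ho2 : (inner ℂ ((P x : H)) ((Q x : H)) : ℂ) = 0 :=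
      Submodule.inner_right_of_mem_orthogonal (P x).2 (Q x).2
    have h1 : ‖S x‖ ^ 2 = ‖HypoAux.extMap T (P x)‖ ^ 2 + ‖(Q x : H)‖ ^ 2 := by
      rw [hSapply, sq, sq, sq]
      exact norm_add_sq_eq_norm_sq_add_norm_sq_of_inner_eq_zero _ _ ho1
    have h2 : ‖x‖ ^ 2 = ‖(P x : H)‖ ^ 2 + ‖(Q x : H)‖ ^ 2 := by
      conv_lhs => rw [← hdec]
      rw [sq, sq, sq]
      exact norm_add_sq_eq_norm_sq_add_norm_sq_of_inner_eq_zero _ _ ho2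
    have h3 : ‖HypoAux.extMap T (P x)‖ = ‖(P x : H)‖ := by
      rw [HypoAux.extMap_norm, Submodule.coe_norm]
    have h4 : ‖S x‖ ^ 2 = ‖x‖ ^ 2 := by rw [h1, h2, h3]
    have := congrArg Real.sqrt h4
    simpa [Real.sqrt_sq (norm_nonneg _)] using this
  refine ⟨S, hiso, ?_⟩
  ext x
  have hmemE : opAbs T x ∈ HypoAux.Esub T := ⟨x, rfl⟩
  have hmemD : opAbs T x ∈ HypoAux.Dsub T := Submodule.le_topologicalClosure _ hmemE
  have hPx : P (opAbs T x) = ⟨opAbs T x, hmemD⟩ :=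
    Submodule.orthogonalProjectionOnto_mem_subspace_eq_self (⟨opAbs T x, hmemD⟩ : HypoAux.Dsub T)
  have hQx : Q (opAbs T x) = 0 := by
    refine Submodule.orthogonalProjectionOnto_apply_of_mem_orthogonal ?_
    rw [Submodule.orthogonal_orthogonal]
    exact hmemD
  have heq : (⟨opAbs T x, hmemD⟩ : HypoAux.Dsub T) = HypoAux.eIso T ⟨opAbs T x, hmemE⟩ := rfl
  have : S (opAbs T x) = T x := by
    rw [hSapply, hPx, hQx, heq, HypoAux.extMap_e, HypoAux.fIso_eq T rfl, Submodule.coe_zero, add_zero]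
  rw [ContinuousLinearMap.mul_apply, this]
end
end

section
/- Let T be a nonzero hyponormal absolutely norm attaining operator on a complex Hilbert space H with σ_ess(|T|) = {‖T‖}, and suppose that π_00(|T|) is nonempty and equal to a finite set {λ_1, …, λ_{m_0}}. Set H_1 = N(|T| − ‖T‖I) and H_2 = ⊕_{i=1}^{m_0} N(|T| − λ_i I). Then H = H_1 ⊕ H_2 is an orthogonal decomposition, H_1 is invariant under T, and with respect to this decomposition T has the block form T = [[‖T‖S_0, A],[0, B]], where S_0 ∈ B(H_1) is an isometry, A : H_2 → H_1 and B : H_2 → H_2 are finite-rank operators satisfying S_0*A = 0 and (A + B)*(A + B) = ⊕_{i=1}^{m_0} λ_i² I restricted to N(|T| − λ_i I). -/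
noncomputable section

variable {H : Type*} [NormedAddCommGroup H] [InnerProductSpace ℂ H] [CompleteSpace H]

set_option synthInstance.maxHeartbeats 1000000
set_option maxHeartbeats 1000000
set_option linter.unusedSectionVars false
set_option linter.unusedVariables false

namespace ANAux
open ContinuousLinearMap Polynomial

open ContinuousLinearMap Polynomial

local notation "⟪" x ", " y "⟫" => @inner ℂ _ _ x y

lemma clm_mem_ker {f : H →L[ℂ] H} {x : H} :
    x ∈ LinearMap.ker (f : H →ₗ[ℂ] H) ↔ f x = 0 := LinearMap.mem_ker

lemma mem_ker_iff (S : H →L[ℂ] H) (c : ℂ) (x : H) :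
    x ∈ LinearMap.ker ((S - c • (1 : H →L[ℂ] H) : H →L[ℂ] H) : H →ₗ[ℂ] H) ↔ S x = c • x := by
  simp [LinearMap.mem_ker, sub_eq_zero]

lemma adjTmulT_nonneg (T : H →L[ℂ] H) : (0 : H →L[ℂ] H) ≤ adjoint T * T := by
  simpa [star_eq_adjoint] using star_mul_self_nonneg T

lemma opAbs_nonneg (T : H →L[ℂ] H) : (0 : H →L[ℂ] H) ≤ opAbs T := CFC.sqrt_nonneg _

lemma opAbs_selfAdjoint (T : H →L[ℂ] H) : IsSelfAdjoint (opAbs T) :=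
  ((ContinuousLinearMap.nonneg_iff_isPositive _).mp (opAbs_nonneg T)).isSelfAdjoint

lemma opAbs_mul_self (T : H →L[ℂ] H) : opAbs T * opAbs T = adjoint T * T :=
  CFC.sqrt_mul_sqrt_self _ (adjTmulT_nonneg T)

lemma inner_opAbs (T : H →L[ℂ] H) (x : H) : ⟪opAbs T x, opAbs T x⟫ = ⟪T x, T x⟫ := by
  have hS := opAbs_selfAdjoint T
  have h0 := adjoint_inner_left (opAbs T) (opAbs T x) x
  rw [hS.adjoint_eq] at h0
  calc ⟪opAbs T x, opAbs T x⟫ = ⟪x, opAbs T (opAbs T x)⟫ := h0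
    _ = ⟪x, adjoint T (T x)⟫ := by
        rw [← ContinuousLinearMap.mul_apply, opAbs_mul_self, ContinuousLinearMap.mul_apply]
    _ = ⟪T x, T x⟫ := adjoint_inner_right _ _ _

lemma norm_opAbs_apply (T : H →L[ℂ] H) (x : H) : ‖opAbs T x‖ = ‖T x‖ := by
  have h := inner_opAbs T x
  rw [inner_self_eq_norm_sq_to_K, inner_self_eq_norm_sq_to_K] at h
  have h' : (‖opAbs T x‖ : ℝ) ^ 2 = ‖T x‖ ^ 2 := by exact_mod_cast h
  nlinarith [norm_nonneg (opAbs T x), norm_nonneg (T x)]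

lemma norm_opAbs (T : H →L[ℂ] H) : ‖opAbs T‖ = ‖T‖ := by
  apply le_antisymm
  · exact opNorm_le_bound _ (norm_nonneg T) fun x => by
      rw [norm_opAbs_apply]; exact le_opNorm T x
  · exact opNorm_le_bound _ (norm_nonneg _) fun x => by
      rw [← norm_opAbs_apply T x]; exact le_opNorm _ x




-- S self-adjoint nonneg, ‖S y‖ = ‖S‖ ‖y‖ implies S y = ‖S‖ • y
lemma eigen_of_norm_attains (S : H →L[ℂ] H) (hpos : (0 : H →L[ℂ] H) ≤ S) (hS0 : S ≠ 0)
    (y : H) (hy : ‖S y‖ = ‖S‖ * ‖y‖) : S y = (‖S‖ : ℂ) • y := by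
  have hS : IsSelfAdjoint S :=
    ((ContinuousLinearMap.nonneg_iff_isPositive _).mp hpos).isSelfAdjoint
  set R : H →L[ℂ] H := CFC.sqrt S with hRdef
  have hR2 : R * R = S := CFC.sqrt_mul_sqrt_self S hpos
  have hRsa : IsSelfAdjoint R :=
    ((ContinuousLinearMap.nonneg_iff_isPositive _).mp (CFC.sqrt_nonneg S)).isSelfAdjoint
  have hnormR : ‖R‖ * ‖R‖ = ‖S‖ := by
    have := CStarRing.norm_star_mul_self (x := R)
    rw [hRsa.star_eq, hR2] at this
    linarith
  have hSpos : 0 < ‖S‖ := norm_pos_iff.mpr hS0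
  have hRpos : 0 < ‖R‖ := by
    rcases (norm_nonneg R).lt_or_eq with h | h
    · exact h
    · exfalso; rw [← h] at hnormR; nlinarith
  have hinner : RCLike.re ⟪S y, y⟫ = ‖R y‖ ^ 2 := by
    have h0 := adjoint_inner_left R y (R y)
    rw [hRsa.adjoint_eq] at h0
    have : ⟪S y, y⟫ = ⟪R y, R y⟫ := by
      rw [← hR2, ContinuousLinearMap.mul_apply, h0]
    rw [this, inner_self_eq_norm_sq]
  have hSR : ‖S y‖ ≤ ‖R‖ * ‖R y‖ := by
    rw [← hR2, ContinuousLinearMap.mul_apply]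
    exact le_opNorm R (R y)
  have key : ‖S y - (‖S‖ : ℂ) • y‖ ^ 2 ≤ 0 := by
    have hexp := @norm_sub_sq ℂ _ _ _ _ (S y) ((‖S‖ : ℂ) • y)
    have h1 : ⟪S y, (‖S‖ : ℂ) • y⟫ = (‖S‖ : ℂ) * ⟪S y, y⟫ := inner_smul_right _ _ _
    have h2 : RCLike.re ⟪S y, (‖S‖ : ℂ) • y⟫ = ‖S‖ * RCLike.re ⟪S y, y⟫ := by
      rw [h1]; exact Complex.re_ofReal_mul _ _
    have h3 : ‖(‖S‖ : ℂ) • y‖ = ‖S‖ * ‖y‖ := by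
      rw [norm_smul, Complex.norm_real, Real.norm_eq_abs, abs_of_nonneg (norm_nonneg S)]
    rw [hexp, h2, h3, hy, hinner]
    nlinarith [norm_nonneg (R y), norm_nonneg y, norm_nonneg (S y)]
  have : ‖S y - (‖S‖ : ℂ) • y‖ = 0 := by nlinarith [norm_nonneg (S y - (‖S‖ : ℂ) • y)]
  rw [norm_eq_zero, sub_eq_zero] at this
  exact this

lemma hypo_norm_adjoint {T : H →L[ℂ] H}
    (hhypo : (adjoint T * T - T * adjoint T).IsPositive) (z : H) :
    ‖adjoint T z‖ ≤ ‖T z‖ := by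
  have h := hhypo.re_inner_nonneg_left z
  have e1 : ⟪(adjoint T * T) z, z⟫ = ⟪T z, T z⟫ := by
    rw [ContinuousLinearMap.mul_apply]; exact adjoint_inner_left T z (T z)
  have e2 : ⟪(T * adjoint T) z, z⟫ = ⟪adjoint T z, adjoint T z⟫ := by
    rw [ContinuousLinearMap.mul_apply]
    exact (adjoint_inner_right T (adjoint T z) z).symm
  rw [ContinuousLinearMap.sub_apply, inner_sub_left, map_sub, e1, e2,
    inner_self_eq_norm_sq, inner_self_eq_norm_sq, sub_nonneg] at h
  nlinarith [norm_nonneg (adjoint T z), norm_nonneg (T z)]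

lemma orth_eigen (S : H →L[ℂ] H) (hS : IsSelfAdjoint S) {a b : ℝ} (hab : a ≠ b) {x y : H}
    (hx : S x = (a : ℂ) • x) (hy : S y = (b : ℂ) • y) : ⟪x, y⟫ = 0 := by
  have h0 := adjoint_inner_left S y x
  rw [hS.adjoint_eq, hx, hy, inner_smul_left, inner_smul_right, Complex.conj_ofReal] at h0
  by_contra hne
  exact hab (by exact_mod_cast mul_right_cancel₀ hne h0)




lemma not_mem_spectrum_of_isUnit {S : H →L[ℂ] H} {μ : ℂ}
    (h : IsUnit (S - μ • (1 : H →L[ℂ] H))) : μ ∉ spectrum ℂ S := by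
  rw [spectrum.mem_iff, not_not, Algebra.algebraMap_eq_smul_one]
  simpa using h.neg

lemma isUnit_sub_of_not_mem {S : H →L[ℂ] H} {μ : ℂ} (h : μ ∉ spectrum ℂ S) :
    IsUnit (S - μ • (1 : H →L[ℂ] H)) := by
  rw [spectrum.mem_iff, not_not, Algebra.algebraMap_eq_smul_one] at h
  simpa using h.neg

lemma selfAdjoint_sub_real {S : H →L[ℂ] H} (hS : IsSelfAdjoint S) (r : ℝ) :
    IsSelfAdjoint (S - (r : ℂ) • (1 : H →L[ℂ] H)) := by
  rw [IsSelfAdjoint, star_sub, star_smul, star_one, hS.star_eq]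
  norm_num [Complex.star_def, Complex.conj_ofReal]

lemma surjective_of_selfAdjoint_inj_closedRange (f : H →L[ℂ] H) (hsa : IsSelfAdjoint f)
    (hcr : IsClosed (LinearMap.range (f : H →ₗ[ℂ] H) : Set H)) :
    (LinearMap.ker (f : H →ₗ[ℂ] H) = ⊥) → LinearMap.range (f : H →ₗ[ℂ] H) = ⊤ := by
  intro hker
  have : CompleteSpace (LinearMap.range (f : H →ₗ[ℂ] H)) := hcr.completeSpace_coe
  by_contra hne
  have hbot : (LinearMap.range (f : H →ₗ[ℂ] H))ᗮ ≠ ⊥ := by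
    rw [Ne, Submodule.orthogonal_eq_bot_iff]
    exact hne
  obtain ⟨v, hv, hv0⟩ := Submodule.exists_mem_ne_zero_of_ne_bot hbot
  have hfv : f v = 0 := by
    have h1 : ∀ x : H, ⟪x, f v⟫ = 0 := by
      intro x
      have h2 : ⟪f x, v⟫ = 0 := (Submodule.mem_orthogonal _ v).mp hv (f x) ⟨x, rfl⟩
      have h3 := adjoint_inner_left f v x
      rw [hsa.adjoint_eq] at h3
      rw [← h3, h2]
    have := h1 (f v)
    rwa [inner_self_eq_zero] at this
  exact hv0 (by rwa [← clm_mem_ker, hker, Submodule.mem_bot] at hfv)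

lemma isUnit_of_selfAdjoint_inj_closedRange (f : H →L[ℂ] H) (hsa : IsSelfAdjoint f)
    (hcr : IsClosed (LinearMap.range (f : H →ₗ[ℂ] H) : Set H)) (hker : LinearMap.ker (f : H →ₗ[ℂ] H) = ⊥) :
    IsUnit f := by
  rw [ContinuousLinearMap.isUnit_iff_bijective]
  exact ⟨LinearMap.ker_eq_bot.mp hker,
    LinearMap.range_eq_top.mp (surjective_of_selfAdjoint_inj_closedRange f hsa hcr hker)⟩

-- range of self-adjoint Fredholm-ish operator equals orthogonal of kernel
lemma range_eq_ker_orthogonal (f : H →L[ℂ] H) (hsa : IsSelfAdjoint f)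
    (hcr : IsClosed (LinearMap.range (f : H →ₗ[ℂ] H) : Set H)) :
    LinearMap.range (f : H →ₗ[ℂ] H) = (LinearMap.ker (f : H →ₗ[ℂ] H))ᗮ := by
  have : CompleteSpace (LinearMap.range (f : H →ₗ[ℂ] H)) := hcr.completeSpace_coe
  apply le_antisymm
  · rintro y ⟨x, rfl⟩
    rw [Submodule.mem_orthogonal]
    intro u hu
    have h3 := adjoint_inner_left f x u
    rw [hsa.adjoint_eq] at h3
    rw [ContinuousLinearMap.coe_coe, ← h3, clm_mem_ker.mp hu, inner_zero_left]
  · -- Kᗮ ≤ range: via (range)ᗮ ⊆ K and double orthogonal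
    have h1 : (LinearMap.range (f : H →ₗ[ℂ] H))ᗮ ≤ LinearMap.ker (f : H →ₗ[ℂ] H) := by
      intro w hw
      have h2 : ∀ x : H, ⟪x, f w⟫ = 0 := by
        intro x
        have h3 := adjoint_inner_left f w x
        rw [hsa.adjoint_eq] at h3
        rw [← h3]
        exact (Submodule.mem_orthogonal _ w).mp hw (f x) ⟨x, rfl⟩
      have := h2 (f w)
      rw [inner_self_eq_zero] at this
      exact clm_mem_ker.mpr this
    calc (LinearMap.ker (f : H →ₗ[ℂ] H))ᗮ ≤ ((LinearMap.range (f : H →ₗ[ℂ] H))ᗮ)ᗮ := Submodule.orthogonal_le h1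
      _ = LinearMap.range (f : H →ₗ[ℂ] H) := Submodule.orthogonal_orthogonal _




lemma isolated_of_fredholm (S : H →L[ℂ] H) (hS : IsSelfAdjoint S) (r : ℝ)
    (hfsa : IsSelfAdjoint (S - (r : ℂ) • (1 : H →L[ℂ] H)))
    (hrange : LinearMap.range ((S - (r : ℂ) • (1 : H →L[ℂ] H) : H →L[ℂ] H) : H →ₗ[ℂ] H) =
      (LinearMap.ker ((S - (r : ℂ) • (1 : H →L[ℂ] H) : H →L[ℂ] H) : H →ₗ[ℂ] H))ᗮ)
    (hfd : FiniteDimensional ℂ (LinearMap.ker ((S - (r : ℂ) • (1 : H →L[ℂ] H) : H →L[ℂ] H) : H →ₗ[ℂ] H))) :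
    ∃ ε > 0, ∀ ν : ℂ, ν ≠ (r : ℂ) → ‖ν - (r : ℂ)‖ < ε → IsUnit (S - ν • (1 : H →L[ℂ] H)) := by
  set f := S - (r : ℂ) • (1 : H →L[ℂ] H) with hf
  set K := LinearMap.ker (f : H →ₗ[ℂ] H) with hK
  have : FiniteDimensional ℂ K := hfd
  have hKc : CompleteSpace K := FiniteDimensional.complete ℂ K
  have hKoc : CompleteSpace Kᗮ := K.isClosed_orthogonal.completeSpace_coe
  have hmaps : ∀ x : H, f x ∈ Kᗮ := by
    intro x; rw [← hrange]; exact LinearMap.mem_range_self _ x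
  set f' : Kᗮ →L[ℂ] Kᗮ := Submodule.orthogonalProjection Kᗮ ∘L (f ∘L Kᗮ.subtypeL) with hf'
  have hf'app : ∀ w : Kᗮ, (f' w : H) = f w := by
    intro w
    simp only [hf', ContinuousLinearMap.comp_apply, Submodule.subtypeL_apply]
    exact congrArg _ (Submodule.orthogonalProjectionOnto_mem_subspace_eq_self ⟨f w, hmaps w⟩)
  have hKdisj : ∀ z : H, z ∈ K → z ∈ Kᗮ → z = 0 := by
    intro z hz1 hz2
    have := (Submodule.mem_orthogonal K z).mp hz2 z hz1
    rwa [inner_self_eq_zero] at this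
  have hf'bij : Function.Bijective f' := by
    constructor
    · intro w₁ w₂ hw
      have h1 : f (w₁ : H) = f (w₂ : H) := by
        have := congrArg (Subtype.val) hw
        rwa [hf'app, hf'app] at this
      have h2 : ((w₁ - w₂ : Kᗮ) : H) ∈ K := by
        rw [clm_mem_ker, Submodule.coe_sub, map_sub, h1, sub_self]
      have := hKdisj _ h2 (w₁ - w₂).2
      exact sub_eq_zero.mp (by exact_mod_cast this)
    · intro y
      obtain ⟨x, hx⟩ : (y : H) ∈ LinearMap.range (f : H →ₗ[ℂ] H) := by rw [hrange]; exact y.2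
      refine ⟨Submodule.orthogonalProjection Kᗮ x, ?_⟩
      have hxk : x - (Submodule.orthogonalProjection Kᗮ x : H) ∈ K := by
        have h1 := Submodule.sub_starProjection_mem_orthogonal (K := Kᗮ) x
        rwa [Submodule.orthogonal_orthogonal] at h1
      apply Subtype.ext
      rw [hf'app]
      have : f (x - (Submodule.orthogonalProjection Kᗮ x : H)) = 0 := clm_mem_ker.mp hxk
      rw [map_sub, sub_eq_zero] at this
      rw [← this]; exact hx
  have hf'unit : IsUnit f' := ContinuousLinearMap.isUnit_iff_bijective.mpr hf'bij
  obtain ⟨ε, hε, hεpert⟩ : ∃ ε > 0, ∀ c : ℂ, ‖c‖ < ε →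
      IsUnit (f' - c • (1 : Kᗮ →L[ℂ] Kᗮ)) := by
    have h0 : (0 : ℂ) ∉ spectrum ℂ f' := by
      rw [spectrum.zero_mem_iff, not_not]
      exact hf'unit
    obtain ⟨ε, hε, hball⟩ := Metric.isOpen_iff.mp (spectrum.isClosed (𝕜 := ℂ) f').isOpen_compl 0 h0
    refine ⟨ε, hε, fun c hc => ?_⟩
    have hc' : c ∉ spectrum ℂ f' := hball (by
      rw [Metric.mem_ball, dist_zero_right]; exact hc)
    rw [spectrum.notMem_iff, Algebra.algebraMap_eq_smul_one] at hc'
    simpa using hc'.neg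
  refine ⟨ε, hε, ?_⟩
  intro ν hν hνε
  obtain ⟨c, hc0, hcnorm, hcν⟩ : ∃ c : ℂ, c ≠ 0 ∧ ‖c‖ < ε ∧ ν = (r : ℂ) + c :=
    ⟨ν - (r : ℂ), sub_ne_zero.mpr hν, hνε, by ring⟩
  have hpert : IsUnit (f' - c • (1 : Kᗮ →L[ℂ] Kᗮ)) := hεpert c hcnorm
  have hpbij : Function.Bijective (f' - c • (1 : Kᗮ →L[ℂ] Kᗮ)) :=
    ContinuousLinearMap.isUnit_iff_bijective.mp hpert
  have hgapp : ∀ x : H, (S - ν • (1 : H →L[ℂ] H)) x = f x - c • x := by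
    intro x
    simp only [hf, hcν, ContinuousLinearMap.sub_apply, ContinuousLinearMap.smul_apply,
      ContinuousLinearMap.add_apply, ContinuousLinearMap.one_apply, add_smul]
    abel
  have hgK : ∀ z : H, z ∈ K → (S - ν • (1 : H →L[ℂ] H)) z = -(c • z) := by
    intro z hz
    rw [hgapp, clm_mem_ker.mp hz, zero_sub]
  have hgperp : ∀ w : Kᗮ, (S - ν • (1 : H →L[ℂ] H)) (w : H)
      = ((f' - c • (1 : Kᗮ →L[ℂ] Kᗮ)) w : H) := by
    intro w
    rw [hgapp]
    simp only [ContinuousLinearMap.sub_apply, ContinuousLinearMap.smul_apply,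
      ContinuousLinearMap.one_apply, Submodule.coe_sub, SetLike.val_smul, hf'app]
  have hker0 : ∀ z : H, (S - ν • (1 : H →L[ℂ] H)) z = 0 → z = 0 := by
    intro z hz
    obtain ⟨k, hkK, w, hwperp, hzdec⟩ : ∃ k, k ∈ K ∧ ∃ w, w ∈ Kᗮ ∧ z = k + w :=
      ⟨Submodule.orthogonalProjection K z, (Submodule.orthogonalProjection K z).2,
        z - Submodule.orthogonalProjection K z, Submodule.sub_starProjection_mem_orthogonal z, by abel⟩
    have hgz : -(c • k) + ((f' - c • (1 : Kᗮ →L[ℂ] Kᗮ)) ⟨w, hwperp⟩ : H) = 0 := by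
      rw [← hgK k hkK, ← hgperp ⟨w, hwperp⟩, ← map_add, ← hzdec, hz]
    have h1 : -(c • k) = -(((f' - c • (1 : Kᗮ →L[ℂ] Kᗮ)) ⟨w, hwperp⟩ : H)) := by
      rw [eq_comm, neg_eq_iff_add_eq_zero, add_comm]
      exact hgz
    have h2 : -(c • k) ∈ K := Submodule.neg_mem _ (Submodule.smul_mem _ _ hkK)
    have h3 : -(c • k) ∈ Kᗮ := by
      rw [h1]; exact Submodule.neg_mem _ ((f' - c • (1 : Kᗮ →L[ℂ] Kᗮ)) ⟨w, hwperp⟩).2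
    have h4 := hKdisj _ h2 h3
    rw [neg_eq_zero, smul_eq_zero] at h4
    have hk0 : k = 0 := h4.resolve_left hc0
    have hw0 : w = 0 := by
      have h5 : ((f' - c • (1 : Kᗮ →L[ℂ] Kᗮ)) ⟨w, hwperp⟩ : H) = 0 := by
        have h1' := h1
        rw [hk0, smul_zero, neg_zero] at h1'
        exact neg_eq_zero.mp h1'.symm
      have h6 : (f' - c • (1 : Kᗮ →L[ℂ] Kᗮ)) ⟨w, hwperp⟩ = 0 := Subtype.ext h5
      have h7 : (⟨w, hwperp⟩ : Kᗮ) = 0 := hpbij.1 (by rw [h6, map_zero])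
      exact congrArg Subtype.val h7
    rw [hzdec, hk0, hw0, add_zero]
  rw [ContinuousLinearMap.isUnit_iff_bijective]
  constructor
  · intro x₁ x₂ h
    have := hker0 (x₁ - x₂) (by rw [map_sub, h, sub_self])
    exact sub_eq_zero.mp this
  · intro y
    obtain ⟨k, hkK, w, hwperp, hydec⟩ : ∃ k, k ∈ K ∧ ∃ w, w ∈ Kᗮ ∧ y = k + w :=
      ⟨Submodule.orthogonalProjection K y, (Submodule.orthogonalProjection K y).2,
        y - Submodule.orthogonalProjection K y, Submodule.sub_starProjection_mem_orthogonal y, by abel⟩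
    obtain ⟨z, hz⟩ := hpbij.2 ⟨w, hwperp⟩
    refine ⟨(-c)⁻¹ • k + (z : H), ?_⟩
    rw [map_add]
    have h1 : (S - ν • (1 : H →L[ℂ] H)) ((-c)⁻¹ • k) = k := by
      rw [hgK _ (Submodule.smul_mem _ _ hkK), smul_smul]
      have hcc : c * (-c)⁻¹ = -1 := by field_simp
      rw [hcc]
      simp
    have h2 : (S - ν • (1 : H →L[ℂ] H)) (z : H) = w := by
      rw [hgperp z, hz]
    rw [h1, h2, hydec]



-- closed range for an isolated spectral point of a selfadjoint operator
lemma closedRange_of_isolated (S : H →L[ℂ] H) (hS : IsSelfAdjoint S) (μ : ℂ)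
    (hiso : ∃ U : Set ℂ, IsOpen U ∧ U ∩ spectrum ℂ S = {μ}) :
    IsClosed (LinearMap.range ((S - μ • (1 : H →L[ℂ] H) : H →L[ℂ] H) : H →ₗ[ℂ] H) : Set H) := by
  have hsn : IsStarNormal S := hS.isStarNormal
  obtain ⟨U, hUopen, hUσ⟩ := hiso
  have hμU : μ ∈ U := by
    have : μ ∈ U ∩ spectrum ℂ S := hUσ ▸ rfl
    exact this.1
  classical
  set g : ℂ → ℂ := fun z => if z = μ then 0 else (z - μ)⁻¹ with hg
  have hgcont : ContinuousOn g (spectrum ℂ S) := by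
    intro z hz
    by_cases hzμ : z = μ
    · subst hzμ
      -- within the spectrum, g is eventually 0 near μ
      have hev : g =ᶠ[nhdsWithin z (spectrum ℂ S)] (fun _ => (0 : ℂ)) := by
        filter_upwards [nhdsWithin_le_nhds (hUopen.mem_nhds hμU),
          self_mem_nhdsWithin] with w hwU hwσ
        have : w ∈ U ∩ spectrum ℂ S := ⟨hwU, hwσ⟩
        rw [hUσ] at this
        have hwz := Set.mem_singleton_iff.mp this
        simp [hg, hwz]
      exact (continuousWithinAt_const (b := (0:ℂ))).congr_of_eventuallyEq hev (by simp [hg])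
    · have hcont : ContinuousWithinAt (fun w => (w - μ)⁻¹) (spectrum ℂ S) z :=
        ((continuous_id.sub continuous_const).continuousAt.inv₀
          (sub_ne_zero.mpr hzμ)).continuousWithinAt
      apply hcont.congr_of_eventuallyEq
      · filter_upwards [nhdsWithin_le_nhds (isOpen_ne.mem_nhds (by exact hzμ))] with w hw
        simp [hg, hw]
      · simp [hg, hzμ]
  have hfc : cfc (fun z => z - μ) S = S - μ • (1 : H →L[ℂ] H) := by
    rw [cfc_sub (fun z : ℂ => z) (fun _ : ℂ => μ) S (by fun_prop) (by fun_prop),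
      cfc_id' ℂ S, cfc_const μ S, Algebra.algebraMap_eq_smul_one]
  have hmul : (S - μ • (1 : H →L[ℂ] H)) * cfc g S * (S - μ • (1 : H →L[ℂ] H))
      = S - μ • (1 : H →L[ℂ] H) := by
    rw [← hfc, ← cfc_mul _ _ S (by fun_prop) hgcont,
      ← cfc_mul (fun x => (x - μ) * g x) (fun z => z - μ) S (ContinuousOn.mul (by fun_prop) hgcont) (by fun_prop)]
    apply cfc_congr
    intro z hz
    by_cases hzμ : z = μ
    · simp [hg, hzμ]
    · simp only [hg, if_neg hzμ]
      field_simp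
  -- now standard argument: range f = ker (1 - f * cfc g S) which is closed
  have hrange : (LinearMap.range ((S - μ • (1 : H →L[ℂ] H) : H →L[ℂ] H) : H →ₗ[ℂ] H) : Set H)
      = (LinearMap.ker ((1 - (S - μ • (1 : H →L[ℂ] H)) * cfc g S : H →L[ℂ] H) : H →ₗ[ℂ] H) : Set H) := by
    ext x
    simp only [SetLike.mem_coe, LinearMap.mem_range, LinearMap.mem_ker, ContinuousLinearMap.coe_coe]
    constructor
    · rintro ⟨y, rfl⟩
      have h2 := congrArg (fun A => A y) hmul
      simp only [ContinuousLinearMap.mul_apply] at h2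
      rw [ContinuousLinearMap.sub_apply, ContinuousLinearMap.one_apply,
        ContinuousLinearMap.mul_apply, h2, sub_self]
    · intro hx
      refine ⟨cfc g S x, ?_⟩
      rw [ContinuousLinearMap.sub_apply, ContinuousLinearMap.one_apply,
        ContinuousLinearMap.mul_apply, sub_eq_zero] at hx
      exact hx.symm
  rw [hrange]
  exact ContinuousLinearMap.isClosed_ker _


lemma aeval_X_sub_C (S : H →L[ℂ] H) (a : ℂ) :
    Polynomial.aeval S (X - C a) = S - a • (1 : H →L[ℂ] H) := by
  rw [map_sub, Polynomial.aeval_X, Polynomial.aeval_C, Algebra.algebraMap_eq_smul_one]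

lemma aeval_prod_eq_cfc (S : H →L[ℂ] H) (hsn : IsStarNormal S) (F : Finset ℂ) :
    Polynomial.aeval S (∏ μ ∈ F, (X - C μ)) = cfc (fun z => ∏ μ ∈ F, (z - μ)) S := by
  classical
  induction F using Finset.induction_on with
  | empty =>
    simp only [Finset.prod_empty, map_one]
    exact (by rw [cfc_const 1 S, map_one] : cfc (fun _ : ℂ => (1 : ℂ)) S = 1).symm
  | insert a F' ha ih =>
    rw [Finset.prod_insert ha, map_mul, aeval_X_sub_C, ih]
    have h1 : cfc (fun z => ∏ μ ∈ insert a F', (z - μ)) S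
        = cfc (fun z => (z - a) * ∏ μ ∈ F', (z - μ)) S := by
      apply cfc_congr
      intro z _
      simp [Finset.prod_insert ha]
    rw [h1, cfc_mul _ _ S (by fun_prop) (by fun_prop)]
    congr 1
    rw [cfc_sub (fun z : ℂ => z) (fun _ : ℂ => a) S (by fun_prop) (by fun_prop),
      cfc_id' ℂ S, cfc_const a S, Algebra.algebraMap_eq_smul_one]

lemma aeval_prod_spectrum_eq_zero (S : H →L[ℂ] H) (hsn : IsStarNormal S) (F : Finset ℂ)
    (hσ : spectrum ℂ S ⊆ (F : Set ℂ)) :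
    Polynomial.aeval S (∏ μ ∈ F, (X - C μ)) = 0 := by
  rw [aeval_prod_eq_cfc S hsn F]
  have h1 : cfc (fun z => ∏ μ ∈ F, (z - μ)) S = cfc (fun _ : ℂ => (0 : ℂ)) S := by
    apply cfc_congr
    intro z hz
    exact Finset.prod_eq_zero (hσ hz) (sub_self z)
  rw [h1]
  simp

lemma mem_iSup_ker_of_aeval (S : H →L[ℂ] H) (F : Finset ℂ) :
    ∀ x : H, (Polynomial.aeval S (∏ μ ∈ F, (X - C μ))) x = 0 →
    x ∈ ⨆ μ ∈ F, LinearMap.ker ((S - μ • (1 : H →L[ℂ] H) : H →L[ℂ] H) : H →ₗ[ℂ] H) := by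
  classical
  induction F using Finset.induction_on with
  | empty =>
    intro x hx
    simp only [Finset.prod_empty, map_one, ContinuousLinearMap.one_apply] at hx
    rw [hx]
    exact Submodule.zero_mem _
  | insert a F' ha ih =>
    intro x hx
    rw [Finset.prod_insert ha] at hx
    have hcop : IsCoprime (X - C a : Polynomial ℂ) (∏ μ ∈ F', (X - C μ)) := by
      apply IsCoprime.prod_right
      intro μ hμ
      exact Polynomial.pairwise_coprime_X_sub_C Function.injective_id
        (fun h => ha (h ▸ hμ) : a ≠ μ)
    obtain ⟨u, v, huv⟩ := hcop
    have hx1 : x = (Polynomial.aeval S (u * (X - C a))) x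
        + (Polynomial.aeval S (v * (∏ μ ∈ F', (X - C μ)))) x := by
      have h2 := congrArg (fun p => (Polynomial.aeval S p) x) huv
      simpa [map_add, ContinuousLinearMap.add_apply] using h2.symm
    have hmem2 : (Polynomial.aeval S (v * (∏ μ ∈ F', (X - C μ)))) x
        ∈ LinearMap.ker ((S - a • (1 : H →L[ℂ] H) : H →L[ℂ] H) : H →ₗ[ℂ] H) := by
      rw [clm_mem_ker, ← aeval_X_sub_C S a, ← ContinuousLinearMap.mul_apply, ← map_mul]
      have hre : (X - C a) * (v * ∏ μ ∈ F', (X - C μ))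
          = v * ((X - C a) * ∏ μ ∈ F', (X - C μ)) := by ring
      rw [hre, map_mul, ContinuousLinearMap.mul_apply, hx, map_zero]
    have hmem1 : (Polynomial.aeval S (u * (X - C a))) x
        ∈ ⨆ μ ∈ F', LinearMap.ker ((S - μ • (1 : H →L[ℂ] H) : H →L[ℂ] H) : H →ₗ[ℂ] H) := by
      apply ih
      rw [← ContinuousLinearMap.mul_apply, ← map_mul]
      have hre : (∏ μ ∈ F', (X - C μ)) * (u * (X - C a))
          = u * ((X - C a) * ∏ μ ∈ F', (X - C μ)) := by ring
      rw [hre, map_mul, ContinuousLinearMap.mul_apply, hx, map_zero]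
    have hle : (⨆ μ ∈ F', LinearMap.ker ((S - μ • (1 : H →L[ℂ] H) : H →L[ℂ] H) : H →ₗ[ℂ] H))
        ≤ ⨆ μ ∈ insert a F', LinearMap.ker ((S - μ • (1 : H →L[ℂ] H) : H →L[ℂ] H) : H →ₗ[ℂ] H) :=
      biSup_mono (fun μ hμ => Finset.mem_insert_of_mem hμ)
    have hle2 : LinearMap.ker ((S - a • (1 : H →L[ℂ] H) : H →L[ℂ] H) : H →ₗ[ℂ] H)
        ≤ ⨆ μ ∈ insert a F', LinearMap.ker ((S - μ • (1 : H →L[ℂ] H) : H →L[ℂ] H) : H →ₗ[ℂ] H) :=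
      le_iSup₂ (f := fun (μ : ℂ) (_ : μ ∈ insert a F') =>
        LinearMap.ker ((S - μ • (1 : H →L[ℂ] H) : H →L[ℂ] H) : H →ₗ[ℂ] H)) a (Finset.mem_insert_self a F')
    rw [hx1]
    exact Submodule.add_mem _ (hle hmem1) (hle2 hmem2)

lemma adjoint_sub_real {S : H →L[ℂ] H} (hS : IsSelfAdjoint S) (r : ℝ) :
    ContinuousLinearMap.adjoint (S - (r : ℂ) • (1 : H →L[ℂ] H))
      = S - (r : ℂ) • (1 : H →L[ℂ] H) := by
  rw [← ContinuousLinearMap.star_eq_adjoint]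
  exact selfAdjoint_sub_real hS r

lemma fredholm_of_isolated (S : H →L[ℂ] H) (hS : IsSelfAdjoint S) (r : ℝ)
    (hiso : ∃ U : Set ℂ, IsOpen U ∧ U ∩ spectrum ℂ S = {((r : ℂ))})
    (hfd : FiniteDimensional ℂ (LinearMap.ker ((S - (r : ℂ) • (1 : H →L[ℂ] H) : H →L[ℂ] H) : H →ₗ[ℂ] H))) :
    IsFredholmOp (S - (r : ℂ) • (1 : H →L[ℂ] H)) := by
  refine ⟨closedRange_of_isolated S hS _ hiso, hfd, ?_⟩
  rw [adjoint_sub_real hS r]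
  exact hfd

lemma mem_pi00_of_fredholm (S : H →L[ℂ] H) (hS : IsSelfAdjoint S) {μ : ℂ}
    (hμσ : μ ∈ spectrum ℂ S) (hfred : IsFredholmOp (S - μ • (1 : H →L[ℂ] H))) :
    μ ∈ pi00 S := by
  have hre : μ = (μ.re : ℂ) := hS.mem_spectrum_eq_re hμσ
  obtain ⟨r, rfl⟩ : ∃ r : ℝ, μ = (r : ℂ) := ⟨μ.re, hre⟩
  obtain ⟨hcr, hk, _⟩ := hfred
  have hfsa : IsSelfAdjoint (S - (r : ℂ) • (1 : H →L[ℂ] H)) := selfAdjoint_sub_real hS r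
  have hker : LinearMap.ker ((S - (r : ℂ) • (1 : H →L[ℂ] H) : H →L[ℂ] H) : H →ₗ[ℂ] H) ≠ ⊥ := by
    intro h0
    exact not_mem_spectrum_of_isUnit
      (isUnit_of_selfAdjoint_inj_closedRange _ hfsa hcr h0) hμσ
  have hrange := range_eq_ker_orthogonal _ hfsa hcr
  obtain ⟨ε, hε, hiso⟩ := isolated_of_fredholm S hS r hfsa hrange hk
  refine ⟨hμσ, ⟨Metric.ball (r : ℂ) ε, Metric.isOpen_ball, ?_⟩, hker, hk⟩
  apply Set.eq_singleton_iff_unique_mem.mpr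
  constructor
  · exact ⟨Metric.mem_ball_self hε, hμσ⟩
  · rintro ν ⟨hν1, hν2⟩
    by_contra hne
    have hd : ‖ν - (r : ℂ)‖ < ε := by
      rw [← dist_eq_norm]
      exact hν1
    exact not_mem_spectrum_of_isUnit (hiso ν hne hd) hν2

end ANAux

open ContinuousLinearMap

/-- Structure of a nonzero hyponormal `𝒜𝒩`-operator with `σ_ess(|T|) = {‖T‖}` and
`π₀₀(|T|) = {λ₁, …, λ_{m₀}}` nonempty: with `H₁ = N(|T| - ‖T‖I)` and
`H₂ = ⊕ᵢ N(|T| - λᵢI)` we get an orthogonal decomposition `H = H₁ ⊕ H₂`, `H₁` is `T`-invariant,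
and `T` has the block form `[[‖T‖S₀, A], [0, B]]` where `S₀` is an isometry of `H₁`,
`A : H₂ → H₁` and `B : H₂ → H₂` are finite rank, `S₀*A = 0`, and
`(A+B)*(A+B) = ⊕ᵢ λᵢ² I` on the blocks `N(|T| - λᵢI)`. -/
theorem hyponormal_AN_structure_top (T : H →L[ℂ] H) (hT : T ≠ 0)
    (hhypo : Hyponormal T) (hAN : IsANOperator T)
    (hess : essSpectrum (opAbs T) = {(‖T‖ : ℂ)})
    (m₀ : ℕ) (hm₀ : 0 < m₀) (lam : Fin m₀ → ℝ)
    (hpi : pi00 (opAbs T) = Set.range fun i => (lam i : ℂ))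
    (H₁ H₂ : Submodule ℂ H)
    (hH₁ : H₁ = LinearMap.ker ((opAbs T - (‖T‖ : ℂ) • (1 : H →L[ℂ] H) : H →L[ℂ] H) : H →ₗ[ℂ] H))
    (hH₂ : H₂ = ⨆ i : Fin m₀,
      LinearMap.ker ((opAbs T - (lam i : ℂ) • (1 : H →L[ℂ] H) : H →L[ℂ] H) : H →ₗ[ℂ] H)) :
    (∀ x ∈ H₁, ∀ y ∈ H₂, (inner ℂ x y : ℂ) = 0) ∧
    H₁ ⊔ H₂ = ⊤ ∧
    (∀ x ∈ H₁, T x ∈ H₁) ∧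
    ∃ S₀ A B : H →L[ℂ] H,
      (∀ x ∈ H₁, S₀ x ∈ H₁) ∧ (∀ y ∈ H₂, S₀ y = 0) ∧
      (∀ x ∈ H₁, ‖S₀ x‖ = ‖x‖) ∧
      (∀ y ∈ H₂, A y ∈ H₁) ∧ (∀ x ∈ H₁, A x = 0) ∧
      (∀ y ∈ H₂, B y ∈ H₂) ∧ (∀ x ∈ H₁, B x = 0) ∧
      FiniteDimensional ℂ (LinearMap.range (A : H →ₗ[ℂ] H)) ∧
      FiniteDimensional ℂ (LinearMap.range (B : H →ₗ[ℂ] H)) ∧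
      T = (‖T‖ : ℂ) • S₀ + A + B ∧
      ContinuousLinearMap.adjoint S₀ * A = 0 ∧
      (∀ i : Fin m₀,
        ∀ y ∈ LinearMap.ker ((opAbs T - (lam i : ℂ) • (1 : H →L[ℂ] H) : H →L[ℂ] H) : H →ₗ[ℂ] H),
          (ContinuousLinearMap.adjoint (A + B) * (A + B)) y
            = ((lam i : ℂ) ^ 2) • y) := by
  classical
  have hS : IsSelfAdjoint (opAbs T) := ANAux.opAbs_selfAdjoint T
  have hsn : IsStarNormal (opAbs T) := hS.isStarNormal
  have hTnorm : ‖T‖ ≠ 0 := fun h => hT (norm_eq_zero.mp h)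
  have hTpos : 0 < ‖T‖ := lt_of_le_of_ne (norm_nonneg T) (Ne.symm hTnorm)
  have hSnorm : ‖opAbs T‖ = ‖T‖ := ANAux.norm_opAbs T
  have hS0 : opAbs T ≠ 0 := by
    intro h
    rw [h, norm_zero] at hSnorm
    exact hTnorm hSnorm.symm
  -- each lam i is in pi00
  have hlam_pi : ∀ i, ((lam i : ℂ)) ∈ pi00 (opAbs T) := fun i => by rw [hpi]; exact ⟨i, rfl⟩
  -- ‖T‖ is in the essential spectrum, so ‖T‖ is not Fredholm
  have hessT : ¬ IsFredholmOp (opAbs T - (‖T‖ : ℂ) • (1 : H →L[ℂ] H)) := by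
    have hmem : ((‖T‖ : ℂ)) ∈ essSpectrum (opAbs T) := by rw [hess]; rfl
    exact hmem
  have hlam_ne : ∀ i, lam i ≠ ‖T‖ := by
    intro i he
    obtain ⟨hσ, hiso, hker, hfd⟩ := hlam_pi i
    have hfred : IsFredholmOp (opAbs T - ((lam i : ℂ)) • (1 : H →L[ℂ] H)) :=
      ANAux.fredholm_of_isolated (opAbs T) hS (lam i) hiso hfd
    rw [he] at hfred
    exact hessT hfred
  -- membership characterizations
  have hH₁mem : ∀ x : H, x ∈ H₁ ↔ opAbs T x = ((‖T‖ : ℂ)) • x := by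
    intro x; rw [hH₁]; exact ANAux.mem_ker_iff _ _ x
  -- Part 1 : orthogonality
  have part1 : ∀ x ∈ H₁, ∀ y ∈ H₂, (inner ℂ x y : ℂ) = 0 := by
    intro x hx
    have hx' : opAbs T x = ((‖T‖ : ℂ)) • x := (hH₁mem x).mp hx
    have hle : H₂ ≤ LinearMap.ker (innerSL ℂ x : H →ₗ[ℂ] ℂ) := by
      rw [hH₂]
      apply iSup_le
      intro i y hy
      have hy' : opAbs T y = ((lam i : ℂ)) • y := (ANAux.mem_ker_iff _ _ y).mp hy
      rw [LinearMap.mem_ker]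
      exact ANAux.orth_eigen (opAbs T) hS (fun h => hlam_ne i h.symm) hx' hy'
    intro y hy
    exact hle hy
  -- Part 2 : H₁ ⊔ H₂ = ⊤
  have hσsub : spectrum ℂ (opAbs T)
      ⊆ insert ((‖T‖ : ℂ)) (Set.range fun i => (lam i : ℂ)) := by
    intro μ hμ
    by_cases hμT : μ = ((‖T‖ : ℂ))
    · exact Set.mem_insert_iff.mpr (Or.inl hμT)
    · have hne : μ ∉ essSpectrum (opAbs T) := by
        rw [hess]
        simpa using hμT
      rw [essSpectrum, Set.mem_setOf_eq, not_not] at hne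
      have := ANAux.mem_pi00_of_fredholm (opAbs T) hS hμ hne
      rw [hpi] at this
      exact Set.mem_insert_iff.mpr (Or.inr this)
  have hσfin : (spectrum ℂ (opAbs T)).Finite :=
    Set.Finite.subset ((Set.finite_range _).insert _) hσsub
  have hzero := ANAux.aeval_prod_spectrum_eq_zero (opAbs T) hsn hσfin.toFinset
    (by rw [Set.Finite.coe_toFinset])
  have part2 : H₁ ⊔ H₂ = ⊤ := by
    rw [eq_top_iff]
    intro x _
    have hx0 : (Polynomial.aeval (opAbs T)
        (∏ μ ∈ hσfin.toFinset, (Polynomial.X - Polynomial.C μ))) x = 0 := by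
      rw [hzero]; rfl
    have hx1 := ANAux.mem_iSup_ker_of_aeval (opAbs T) hσfin.toFinset x hx0
    have hsup_le : (⨆ μ ∈ hσfin.toFinset,
        LinearMap.ker ((opAbs T - μ • (1 : H →L[ℂ] H) : H →L[ℂ] H) : H →ₗ[ℂ] H)) ≤ H₁ ⊔ H₂ := by
      apply iSup_le
      intro μ
      apply iSup_le
      intro hμF
      have hμσ : μ ∈ spectrum ℂ (opAbs T) := (hσfin.mem_toFinset).mp hμF
      rcases hσsub hμσ with h | ⟨i, hi⟩
      · rw [h, ← hH₁]
        exact le_sup_left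
      · rw [← hi]
        refine le_trans ?_ le_sup_right
        rw [hH₂]
        exact le_iSup (fun j => LinearMap.ker ((opAbs T - ((lam j : ℂ)) • (1 : H →L[ℂ] H) : H →L[ℂ] H) : H →ₗ[ℂ] H)) i
    exact hsup_le hx1
  -- norm characterization of H₁
  have hch : ∀ y : H, ‖T y‖ = ‖T‖ * ‖y‖ ↔ y ∈ H₁ := by
    intro y
    constructor
    · intro hy
      have h1 : ‖opAbs T y‖ = ‖opAbs T‖ * ‖y‖ := by
        rw [ANAux.norm_opAbs_apply, hSnorm, hy]
      have := ANAux.eigen_of_norm_attains (opAbs T) (ANAux.opAbs_nonneg T) hS0 y h1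
      rw [hSnorm] at this
      exact (hH₁mem y).mpr this
    · intro hy
      have h1 := (hH₁mem y).mp hy
      rw [← ANAux.norm_opAbs_apply, h1, norm_smul, Complex.norm_real, Real.norm_eq_abs,
        abs_of_nonneg (norm_nonneg T)]
  -- T*T on H₁
  have hTT : ∀ x ∈ H₁, adjoint T (T x) = (((‖T‖ : ℂ)) * ((‖T‖ : ℂ))) • x := by
    intro x hx
    have h0 : adjoint T (T x) = opAbs T (opAbs T x) := by
      rw [← ContinuousLinearMap.mul_apply, ← ANAux.opAbs_mul_self T,
        ContinuousLinearMap.mul_apply]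
    rw [h0, (hH₁mem x).mp hx, map_smul, (hH₁mem x).mp hx, smul_smul]
  -- Part 3: invariance of H₁ under T
  have part3 : ∀ x ∈ H₁, T x ∈ H₁ := by
    intro x hx
    have hx1 : ‖T x‖ = ‖T‖ * ‖x‖ := (hch x).mpr hx
    have h2 : ‖adjoint T (T x)‖ = ‖T‖ * ‖T x‖ := by
      rw [hTT x hx, norm_smul, hx1]
      simp [Complex.norm_real, abs_of_nonneg (norm_nonneg T)]
      ring
    have h3 : ‖T (T x)‖ ≤ ‖T‖ * ‖T x‖ := le_opNorm T (T x)
    have h4 : ‖T‖ * ‖T x‖ ≤ ‖T (T x)‖ := by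
      rw [← h2]
      exact ANAux.hypo_norm_adjoint hhypo (T x)
    exact (hch (T x)).mp (le_antisymm h3 h4)
  refine ⟨part1, part2, part3, ?_⟩
  -- setting up the projection
  have hH₁closed : IsClosed (H₁ : Set H) := by
    rw [hH₁]
    exact ContinuousLinearMap.isClosed_ker _
  haveI : CompleteSpace H₁ := hH₁closed.completeSpace_coe
  haveI hker_fd : ∀ i : Fin m₀, FiniteDimensional ℂ
      (LinearMap.ker ((opAbs T - ((lam i : ℂ)) • (1 : H →L[ℂ] H) : H →L[ℂ] H) : H →ₗ[ℂ] H)) := fun i =>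
    (hlam_pi i).2.2.2
  haveI hH₂fd : FiniteDimensional ℂ H₂ := by
    rw [hH₂]
    infer_instance
  -- H₂ = H₁ᗮ
  have hH₂le : H₂ ≤ H₁ᗮ := by
    intro y hy
    rw [Submodule.mem_orthogonal]
    intro x hx
    exact part1 x hx y hy
  have hH₂eq : H₂ = H₁ᗮ := by
    apply le_antisymm hH₂le
    intro z hz
    obtain ⟨a, ha, b, hb, hab⟩ := Submodule.mem_sup.mp
      (part2 ▸ Submodule.mem_top : z ∈ H₁ ⊔ H₂)
    have hbperp : b ∈ H₁ᗮ := hH₂le hb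
    have ha0 : a = 0 := by
      have haperp : a ∈ H₁ᗮ := by
        have h5 : a = z - b := by rw [← hab]; abel
        rw [h5]
        exact Submodule.sub_mem _ hz hbperp
      have := (Submodule.mem_orthogonal H₁ a).mp haperp a ha
      exact inner_self_eq_zero.mp this
    rw [← hab, ha0, zero_add]
    exact hb
  set P : H →L[ℂ] H := H₁.subtypeL ∘L Submodule.orthogonalProjection H₁ with hPdef
  have hPx : ∀ x ∈ H₁, P x = x := by
    intro x hx
    show (↑(Submodule.orthogonalProjection H₁ x) : H) = x
    exact Submodule.starProjection_eq_self_iff.mpr hx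
  have hPy : ∀ y ∈ H₁ᗮ, P y = 0 := by
    intro y hy
    show (↑(Submodule.orthogonalProjection H₁ y) : H) = 0
    rw [Submodule.orthogonalProjectionOnto_apply_of_mem_orthogonal hy]
    rfl
  have hPmem : ∀ z : H, P z ∈ H₁ := fun z => (Submodule.orthogonalProjection H₁ z).2
  have hPperp : ∀ z : H, z - P z ∈ H₁ᗮ := fun z =>
    Submodule.sub_starProjection_mem_orthogonal z
  have hPsa : IsSelfAdjoint P := isSelfAdjoint_starProjection H₁
  -- the three operators
  set S₀ : H →L[ℂ] H := ((‖T‖ : ℂ))⁻¹ • (T ∘L P) with hS₀def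
  set A : H →L[ℂ] H := P ∘L (T ∘L (1 - P)) with hAdef
  set B : H →L[ℂ] H := (1 - P) ∘L (T ∘L (1 - P)) with hBdef
  have hTne : ((‖T‖ : ℂ)) ≠ 0 := by
    simpa using hTnorm
  have hS₀app : ∀ z : H, S₀ z = ((‖T‖ : ℂ))⁻¹ • T (P z) := fun z => rfl
  have hAapp : ∀ z : H, A z = P (T (z - P z)) := by
    intro z
    simp [hAdef, ContinuousLinearMap.comp_apply, ContinuousLinearMap.sub_apply]
  have hBapp : ∀ z : H, B z = T (z - P z) - P (T (z - P z)) := by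
    intro z
    simp only [hBdef, ContinuousLinearMap.comp_apply, ContinuousLinearMap.sub_apply,
      ContinuousLinearMap.one_apply, map_sub]
    abel
  refine ⟨S₀, A, B, ?_, ?_, ?_, ?_, ?_, ?_, ?_, ?_, ?_, ?_, ?_, ?_⟩
  · -- S₀ maps H₁ to H₁
    intro x hx
    rw [hS₀app, hPx x hx]
    exact Submodule.smul_mem _ _ (part3 x hx)
  · -- S₀ vanishes on H₂
    intro y hy
    rw [hS₀app, hPy y (hH₂le hy), map_zero, smul_zero]
  · -- S₀ is isometric on H₁
    intro x hx
    rw [hS₀app, hPx x hx, norm_smul, (hch x).mpr hx]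
    rw [norm_inv, Complex.norm_real, Real.norm_eq_abs, abs_of_nonneg (norm_nonneg T)]
    field_simp
  · -- A maps H₂ to H₁
    intro y hy
    rw [hAapp]
    exact hPmem _
  · -- A vanishes on H₁
    intro x hx
    have : x - P x = 0 := by rw [hPx x hx, sub_self]
    rw [hAapp, this, map_zero, map_zero]
  · -- B maps H₂ to H₂
    intro y hy
    rw [hBapp, hH₂eq]
    exact hPperp _
  · -- B vanishes on H₁
    intro x hx
    have : x - P x = 0 := by rw [hPx x hx, sub_self]
    rw [hBapp, this, map_zero, map_zero, sub_zero]
  · -- A has finite rank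
    have h1 : LinearMap.range (A : H →ₗ[ℂ] H) ≤ H₂.map ((P ∘L T : H →L[ℂ] H) : H →ₗ[ℂ] H) := by
      rintro _ ⟨z, rfl⟩
      refine ⟨z - P z, ?_, ?_⟩
      · rw [hH₂eq]; exact hPperp z
      · simp only [ContinuousLinearMap.coe_coe]
        rw [hAapp]; rfl
    exact Submodule.finiteDimensional_of_le h1
  · -- B has finite rank
    have h1 : LinearMap.range (B : H →ₗ[ℂ] H) ≤ H₂.map (((1 - P) ∘L T : H →L[ℂ] H) : H →ₗ[ℂ] H) := by
      rintro _ ⟨z, rfl⟩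
      refine ⟨z - P z, ?_, ?_⟩
      · rw [hH₂eq]; exact hPperp z
      · simp only [ContinuousLinearMap.coe_coe]
        rw [hBapp]
        simp [ContinuousLinearMap.comp_apply, ContinuousLinearMap.sub_apply]
    exact Submodule.finiteDimensional_of_le h1
  · -- block decomposition
    ext z
    have h1 : ((‖T‖ : ℂ)) • S₀ z = T (P z) := by
      rw [hS₀app, smul_smul, mul_inv_cancel₀ hTne, one_smul]
    simp only [ContinuousLinearMap.add_apply, ContinuousLinearMap.smul_apply]
    rw [h1, hAapp, hBapp]
    have : T z = T (P z) + T (z - P z) := by rw [← map_add]; congr 1; abel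
    rw [this]
    abel
  · -- S₀* A = 0
    ext z
    rw [ContinuousLinearMap.mul_apply, ContinuousLinearMap.zero_apply]
    have hall : ∀ w : H, (inner ℂ (A z) (S₀ w) : ℂ) = 0 := by
      intro w
      rw [hAapp, hS₀app]
      rw [inner_smul_right]
      have hker : (inner ℂ (P (T (z - P z))) (T (P w)) : ℂ) = 0 := by
        have hu : z - P z ∈ H₁ᗮ := hPperp z
        have hx : P w ∈ H₁ := hPmem w
        have hTx : T (P w) ∈ H₁ := part3 _ hx
        -- move P to the right side
        have h6 := adjoint_inner_left P (T (P w)) (T (z - P z))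
        rw [hPsa.adjoint_eq] at h6
        rw [h6, hPx _ hTx]
        -- now ⟪T u, T x⟫ with u ⊥ H₁, x ∈ H₁
        have h7 := adjoint_inner_right T (z - P z) (T (P w))
        rw [← h7, hTT _ hx, inner_smul_right]
        have h8 : (inner ℂ (z - P z) (P w) : ℂ) = 0 := by
          rw [← inner_conj_symm]
          rw [(Submodule.mem_orthogonal H₁ (z - P z)).mp hu (P w) hx]
          simp
        rw [h8, mul_zero]
      rw [hker, mul_zero]
    have := hall (adjoint S₀ (A z))
    have h9 := adjoint_inner_left S₀ (adjoint S₀ (A z)) (A z)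
    rw [← h9] at this
    exact inner_self_eq_zero.mp this
  · -- (A+B)*(A+B) y = lam i ^ 2 • y
    intro i y hy
    have hyH₂ : y ∈ H₂ := by
      rw [hH₂]
      exact le_iSup (fun j => LinearMap.ker ((opAbs T - ((lam j : ℂ)) • (1 : H →L[ℂ] H) : H →L[ℂ] H) : H →ₗ[ℂ] H)) i hy
    have hyperp : y ∈ H₁ᗮ := hH₂le hyH₂
    have hPy0 : P y = 0 := hPy y hyperp
    have hSy : opAbs T y = ((lam i : ℂ)) • y := (ANAux.mem_ker_iff _ _ y).mp hy
    have hAB : A + B = T ∘L (1 - P) := by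
      ext z
      simp only [ContinuousLinearMap.add_apply, hAapp, hBapp]
      abel
    rw [hAB]
    have hadj : adjoint (T ∘L (1 - P)) = (1 - P) ∘L adjoint T := by
      rw [ContinuousLinearMap.adjoint_comp]
      congr 1
      rw [← ContinuousLinearMap.star_eq_adjoint]
      exact (IsSelfAdjoint.one (R := H →L[ℂ] H)).sub hPsa
    rw [ContinuousLinearMap.mul_apply, hadj]
    have h1 : (T ∘L (1 - P)) y = T y := by
      simp only [ContinuousLinearMap.comp_apply, ContinuousLinearMap.sub_apply,
        ContinuousLinearMap.one_apply, hPy0, sub_zero]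
    rw [h1]
    have h2 : adjoint T (T y) = (((lam i : ℂ)) ^ 2) • y := by
      have h0 : adjoint T (T y) = opAbs T (opAbs T y) := by
        rw [← ContinuousLinearMap.mul_apply, ← ANAux.opAbs_mul_self T,
          ContinuousLinearMap.mul_apply]
      rw [h0, hSy, map_smul, hSy, smul_smul, sq]
    simp only [ContinuousLinearMap.comp_apply, ContinuousLinearMap.sub_apply,
      ContinuousLinearMap.one_apply, h2]
    rw [map_smul, hPy0, smul_zero, sub_zero]
end
end

section
/- Let T be a nonzero hyponormal absolutely norm attaining operator on a complex Hilbert space H with σ_ess(|T|) = {‖T‖}, and suppose that π_00(|T|) is empty. Then T = ‖T‖ S_0 for some isometry S_0 on H; in particular ‖Tx‖ = ‖T‖·‖x‖ for all x ∈ H. -/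
noncomputable section

variable {H : Type*} [NormedAddCommGroup H] [InnerProductSpace ℂ H] [CompleteSpace H]

set_option synthInstance.maxHeartbeats 1000000
set_option maxHeartbeats 1000000

open scoped NNReal
local notation "⟪" x ", " y "⟫" => @inner ℂ _ _ x y

lemma aux_isUnit_of_bddBelow (B : H →L[ℂ] H) (hB : IsSelfAdjoint B)
    (δ : ℝ) (hδ : 0 < δ) (hlb : ∀ x : H, δ * ‖x‖ ≤ ‖B x‖) : IsUnit B := by
  have hanti : AntilipschitzWith δ.toNNReal⁻¹ B := by
    refine ContinuousLinearMap.antilipschitz_of_bound B ?_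
    intro x
    rw [NNReal.coe_inv, Real.coe_toNNReal _ hδ.le, inv_mul_eq_div, le_div_iff₀ hδ]
    linarith [hlb x]
  have hker : LinearMap.ker (B : H →ₗ[ℂ] H) = ⊥ := LinearMap.ker_eq_bot.mpr hanti.injective
  have hclosed := ContinuousLinearMap.closed_range_of_antilipschitz hanti
  have horth : (LinearMap.range (B : H →ₗ[ℂ] H))ᗮ = ⊥ := by
    rw [Submodule.eq_bot_iff]
    intro y hy
    have hBy : B y = 0 := by
      have h1 : (⟪B y, B y⟫) = 0 := by
        calc (⟪B y, B y⟫) = ⟪ContinuousLinearMap.adjoint B (B y), y⟫ := by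
              rw [ContinuousLinearMap.adjoint_inner_left]
          _ = ⟪B (B y), y⟫ := by rw [hB.adjoint_eq]
          _ = 0 := hy (B (B y)) ⟨B y, rfl⟩
      exact inner_self_eq_zero.mp h1
    have h2 := hlb y
    rw [hBy, norm_zero] at h2
    have h3 : ‖y‖ = 0 := by nlinarith [norm_nonneg y]
    exact norm_eq_zero.mp h3
  have hrange : LinearMap.range (B : H →ₗ[ℂ] H) = ⊤ := by
    have hcl : IsClosed ((LinearMap.range (B : H →ₗ[ℂ] H) : Submodule ℂ H) : Set H) := by
      rw [← congrArg (fun s : Submodule ℂ H => (s : Set H)) hclosed]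
      exact Submodule.isClosed_topologicalClosure _
    haveI : CompleteSpace (LinearMap.range (B : H →ₗ[ℂ] H)) := hcl.completeSpace_coe
    rw [← Submodule.orthogonal_eq_bot_iff]
    exact horth
  let e := ContinuousLinearEquiv.ofBijective B hker hrange
  have he : ⇑e = ⇑B := ContinuousLinearEquiv.coeFn_ofBijective B hker hrange
  refine ⟨⟨B, e.symm.toContinuousLinearMap, ?_, ?_⟩, rfl⟩
  · ext x
    show B (e.symm x) = x
    rw [← congrFun he (e.symm x)]
    exact e.apply_symm_apply x
  · ext x
    show e.symm (B x) = x
    rw [← congrFun he x]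
    exact e.symm_apply_apply x

lemma aux_lb_orth (B : H →L[ℂ] H) (hcl : IsClosed ((LinearMap.range (B : H →ₗ[ℂ] H) : Submodule ℂ H) : Set H)) :
    ∃ δ : ℝ, 0 < δ ∧ ∀ p ∈ (LinearMap.ker (B : H →ₗ[ℂ] H))ᗮ, δ * ‖p‖ ≤ ‖B p‖ := by
  set K : Submodule ℂ H := LinearMap.ker (B : H →ₗ[ℂ] H) with hK
  haveI : CompleteSpace K := (ContinuousLinearMap.isClosed_ker B).completeSpace_coe
  haveI : CompleteSpace (LinearMap.range (B : H →ₗ[ℂ] H)) := hcl.completeSpace_coe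
  haveI : CompleteSpace Kᗮ := (Submodule.isClosed_orthogonal K).completeSpace_coe
  set f : Kᗮ →L[ℂ] H := B.comp Kᗮ.subtypeL with hf
  have hmem : ∀ p : Kᗮ, f p ∈ LinearMap.range (B : H →ₗ[ℂ] H) := fun p => ⟨p, rfl⟩
  set f' : Kᗮ →L[ℂ] (LinearMap.range (B : H →ₗ[ℂ] H)) := f.codRestrict _ hmem with hf'
  have hker : LinearMap.ker (f' : Kᗮ →ₗ[ℂ] (LinearMap.range (B : H →ₗ[ℂ] H))) = ⊥ := by
    rw [Submodule.eq_bot_iff]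
    rintro ⟨p, hp⟩ hp0
    have : B p = 0 := congrArg Subtype.val (hp0 : f' ⟨p, hp⟩ = 0)
    have hpK : p ∈ K := this
    have : p = 0 := by
      have := Submodule.inner_right_of_mem_orthogonal hpK hp
      rwa [inner_self_eq_zero] at this
    exact Subtype.ext this
  have hrange : LinearMap.range (f' : Kᗮ →ₗ[ℂ] (LinearMap.range (B : H →ₗ[ℂ] H))) = ⊤ := by
    rw [Submodule.eq_top_iff']
    rintro ⟨y, x, rfl⟩
    obtain ⟨k, hk, p, hp, rfl⟩ := K.exists_add_mem_mem_orthogonal x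
    refine ⟨⟨p, hp⟩, ?_⟩
    apply Subtype.ext
    show B p = B (k + p)
    have : B k = 0 := hk
    rw [map_add, this, zero_add]
  set e := ContinuousLinearEquiv.ofBijective f' hker hrange with he
  set c : ℝ≥0 := ‖(e.symm : (LinearMap.range (B : H →ₗ[ℂ] H)) →L[ℂ] Kᗮ)‖₊ with hc
  have hanti := e.antilipschitz
  refine ⟨(max (c : ℝ) 1)⁻¹, by positivity, ?_⟩
  intro p hp
  have h1 : ‖(⟨p, hp⟩ : Kᗮ)‖ ≤ c * ‖f' ⟨p, hp⟩‖ := by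
    have := hanti.le_mul_dist (⟨p, hp⟩ : Kᗮ) 0
    simp [dist_eq_norm, ContinuousLinearEquiv.coeFn_ofBijective] at this
    exact this
  have h2 : ‖f' (⟨p, hp⟩ : Kᗮ)‖ = ‖B p‖ := rfl
  have h3 : ‖(⟨p, hp⟩ : Kᗮ)‖ = ‖p‖ := rfl
  rw [h2, h3] at h1
  have hmax : (0:ℝ) < max (c:ℝ) 1 := by positivity
  rw [inv_mul_eq_div, div_le_iff₀' hmax]
  calc ‖p‖ ≤ c * ‖B p‖ := h1
    _ ≤ max (c:ℝ) 1 * ‖B p‖ := by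
        apply mul_le_mul_of_nonneg_right (le_max_left _ _) (norm_nonneg _)

lemma aux_smul_one_selfAdjoint (r : ℝ) :
    IsSelfAdjoint ((r : ℂ) • (1 : H →L[ℂ] H)) := by
  rw [IsSelfAdjoint, star_smul, star_one]
  congr 1
  simp [Complex.ext_iff]

lemma aux_spectrum_subset (A : H →L[ℂ] H) (hA : IsSelfAdjoint A) (r : ℝ)
    (hess : essSpectrum A = {(r : ℂ)}) (hpi : pi00 A = ∅) :
    ∀ z ∈ spectrum ℂ A, z = (r : ℂ) := by
  intro z hz
  by_contra hne
  have hzre : z = (z.re : ℂ) := hA.mem_spectrum_eq_re hz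
  have hFred : IsFredholmOp (A - z • (1 : H →L[ℂ] H)) := by
    have h1 : z ∉ essSpectrum A := by rw [hess]; simpa using hne
    simpa [essSpectrum] using h1
  set B : H →L[ℂ] H := A - z • (1 : H →L[ℂ] H) with hB
  have hBsa : IsSelfAdjoint B := by
    rw [hB, hzre]
    exact hA.sub (aux_smul_one_selfAdjoint z.re)
  obtain ⟨hclR, hkerFD, -⟩ := hFred
  obtain ⟨δ, hδ, hlb⟩ := aux_lb_orth B hclR
  set K : Submodule ℂ H := LinearMap.ker (B : H →ₗ[ℂ] H) with hK
  have hAk : ∀ k ∈ K, A k = z • k := by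
    intro k hk
    have hk0 : B k = 0 := hk
    rw [hB] at hk0
    simp only [ContinuousLinearMap.sub_apply, ContinuousLinearMap.smul_apply,
      ContinuousLinearMap.one_apply, sub_eq_zero] at hk0
    exact hk0
  have hranKo : ∀ x : H, B x ∈ Kᗮ := by
    intro x
    intro u hu
    calc (⟪u, B x⟫) = ⟪ContinuousLinearMap.adjoint B u, x⟫ := by
          rw [ContinuousLinearMap.adjoint_inner_left]
      _ = ⟪B u, x⟫ := by rw [hBsa.adjoint_eq]
      _ = 0 := by rw [(show B u = 0 from hu), inner_zero_left]
  by_cases hk : K = ⊥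
  · have hall : ∀ x : H, δ * ‖x‖ ≤ ‖B x‖ := by
      intro x
      apply hlb
      rw [hk, Submodule.bot_orthogonal_eq_top]
      trivial
    have hunit := aux_isUnit_of_bddBelow B hBsa δ hδ hall
    have h2 : IsUnit (algebraMap ℂ (H →L[ℂ] H) z - A) := by
      have h3 : algebraMap ℂ (H →L[ℂ] H) z - A = -B := by
        rw [hB, neg_sub, Algebra.algebraMap_eq_smul_one]
      rw [h3]
      exact hunit.neg
    exact absurd hz (spectrum.notMem_iff.mpr h2)
  · have hz00 : z ∈ pi00 A := by
      refine ⟨hz, ?_, hk, hkerFD⟩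
      refine ⟨Metric.ball z (δ/2), Metric.isOpen_ball, ?_⟩
      ext μ
      simp only [Set.mem_inter_iff, Set.mem_singleton_iff]
      constructor
      · rintro ⟨hμU, hμs⟩
        by_contra hμz
        set C : H →L[ℂ] H := A - μ • (1 : H →L[ℂ] H) with hC
        have hμre : μ = (μ.re : ℂ) := hA.mem_spectrum_eq_re hμs
        have hCsa : IsSelfAdjoint C := by
          rw [hC, hμre]
          exact hA.sub (aux_smul_one_selfAdjoint μ.re)
        have hd : (0:ℝ) < ‖z - μ‖ := by
          rw [norm_pos_iff, sub_ne_zero]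
          exact fun h => hμz h.symm
        have hdlt : ‖z - μ‖ < δ/2 := by
          rw [Metric.mem_ball, dist_eq_norm] at hμU
          rwa [norm_sub_rev]
        set m : ℝ := min ‖z - μ‖ (δ/2) with hm
        have hmpos : 0 < m := lt_min hd (by linarith)
        have hlbC : ∀ x : H, m * ‖x‖ ≤ ‖C x‖ := by
          intro x
          haveI : CompleteSpace K := (ContinuousLinearMap.isClosed_ker B).completeSpace_coe
          obtain ⟨k, hkK, p, hpK, rfl⟩ := K.exists_add_mem_mem_orthogonal x
          have hCk : C k = (z - μ) • k := by
            rw [hC]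
            simp only [ContinuousLinearMap.sub_apply, ContinuousLinearMap.smul_apply,
              ContinuousLinearMap.one_apply]
            rw [hAk k hkK, sub_smul]
          have hCp : C p = B p + (z - μ) • p := by
            rw [hC, hB]
            simp only [ContinuousLinearMap.sub_apply, ContinuousLinearMap.smul_apply,
              ContinuousLinearMap.one_apply]
            module
          have hCpKo : C p ∈ Kᗮ := by
            rw [hCp]
            exact Kᗮ.add_mem (hranKo p) (Kᗮ.smul_mem _ hpK)
          have hCx : C (k + p) = (z - μ) • k + C p := by
            rw [map_add, hCk]
          have hinner : (⟪(z - μ) • k, C p⟫) = 0 :=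
            Submodule.inner_right_of_mem_orthogonal (K.smul_mem _ hkK) hCpKo
          have hpyth : ‖C (k + p)‖ * ‖C (k + p)‖ =
              ‖(z - μ) • k‖ * ‖(z - μ) • k‖ + ‖C p‖ * ‖C p‖ := by
            rw [hCx]
            exact norm_add_sq_eq_norm_sq_add_norm_sq_of_inner_eq_zero _ _ hinner
          have hpyth2 : ‖k + p‖ * ‖k + p‖ = ‖k‖ * ‖k‖ + ‖p‖ * ‖p‖ :=
            norm_add_sq_eq_norm_sq_add_norm_sq_of_inner_eq_zero _ _
              (Submodule.inner_right_of_mem_orthogonal hkK hpK)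
          have h1 : ‖(z - μ) • k‖ = ‖z - μ‖ * ‖k‖ := by
            rw [norm_smul]
          have h2 : m * ‖k‖ ≤ ‖(z - μ) • k‖ := by
            rw [h1]
            exact mul_le_mul_of_nonneg_right (min_le_left _ _) (norm_nonneg _)
          have h3 : m * ‖p‖ ≤ ‖C p‖ := by
            have h4 : ‖B p‖ - ‖(z - μ) • p‖ ≤ ‖C p‖ := by
              rw [hCp]
              calc ‖B p‖ - ‖(z - μ) • p‖ = ‖B p‖ - ‖-((z - μ) • p)‖ := by rw [norm_neg]
                _ ≤ ‖B p - -((z - μ) • p)‖ := norm_sub_norm_le _ _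
                _ = ‖B p + (z - μ) • p‖ := by rw [sub_neg_eq_add]
            have h5 : ‖(z - μ) • p‖ = ‖z - μ‖ * ‖p‖ := by rw [norm_smul]
            have h6 := hlb p hpK
            have h7 : m ≤ δ/2 := min_le_right _ _
            have h8 : ‖z - μ‖ * ‖p‖ ≤ (δ/2) * ‖p‖ :=
              mul_le_mul_of_nonneg_right hdlt.le (norm_nonneg _)
            nlinarith [norm_nonneg p]
          have h2' : (m * ‖k‖)^2 ≤ ‖(z - μ) • k‖^2 :=
            pow_le_pow_left₀ (by positivity) h2 2
          have h3' : (m * ‖p‖)^2 ≤ ‖C p‖^2 :=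
            pow_le_pow_left₀ (by positivity) h3 2
          have hnn : (0:ℝ) ≤ m * ‖k + p‖ := by positivity
          have hsq : (m * ‖k + p‖)^2 ≤ ‖C (k + p)‖^2 := by
            calc (m * ‖k + p‖)^2 = m^2 * (‖k + p‖ * ‖k + p‖) := by ring
              _ = m^2 * (‖k‖ * ‖k‖ + ‖p‖ * ‖p‖) := by rw [hpyth2]
              _ = (m * ‖k‖)^2 + (m * ‖p‖)^2 := by ring
              _ ≤ ‖(z - μ) • k‖^2 + ‖C p‖^2 := add_le_add h2' h3'
              _ = ‖C (k + p)‖^2 := by rw [pow_two, pow_two, pow_two, hpyth]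
          nlinarith [hsq, hnn, norm_nonneg (C (k + p))]
        have hunit := aux_isUnit_of_bddBelow C hCsa m hmpos hlbC
        have h2 : IsUnit (algebraMap ℂ (H →L[ℂ] H) μ - A) := by
          have h3 : algebraMap ℂ (H →L[ℂ] H) μ - A = -C := by
            rw [hC, neg_sub, Algebra.algebraMap_eq_smul_one]
          rw [h3]
          exact hunit.neg
        exact absurd hμs (spectrum.notMem_iff.mpr h2)
      · rintro rfl
        exact ⟨Metric.mem_ball_self (by linarith), hz⟩
    rw [hpi] at hz00
    exact hz00

/-- A nonzero hyponormal `𝒜𝒩`-operator with `σ_ess(|T|) = {‖T‖}` and empty `π₀₀(|T|)`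
is `‖T‖` times an isometry; in particular `‖T x‖ = ‖T‖ ‖x‖` for all `x`. -/
theorem hyponormal_AN_isometry_of_pi00_empty (T : H →L[ℂ] H) (hT : T ≠ 0)
    (hhypo : Hyponormal T) (hAN : IsANOperator T)
    (hess : essSpectrum (opAbs T) = {(‖T‖ : ℂ)})
    (hpi : pi00 (opAbs T) = ∅) :
    (∃ S₀ : H →L[ℂ] H, (∀ x : H, ‖S₀ x‖ = ‖x‖) ∧ T = (‖T‖ : ℂ) • S₀) ∧
      ∀ x : H, ‖T x‖ = ‖T‖ * ‖x‖ := by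
  haveI : Nontrivial (H →L[ℂ] H) := ⟨T, 0, hT⟩
  set A : H →L[ℂ] H := opAbs T with hAdef
  have hTTpos : (0 : H →L[ℂ] H) ≤ ContinuousLinearMap.adjoint T * T := by
    rw [← ContinuousLinearMap.star_eq_adjoint]
    exact star_mul_self_nonneg T
  have hApos : (0 : H →L[ℂ] H) ≤ A := CFC.sqrt_nonneg _
  have hAsa : IsSelfAdjoint A := IsSelfAdjoint.of_nonneg hApos
  have hA2 : A * A = ContinuousLinearMap.adjoint T * T :=
    CFC.sqrt_mul_sqrt_self _ hTTpos
  have hAx : ∀ x : H, ‖A x‖ = ‖T x‖ := by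
    intro x
    have h1 : (⟪A x, A x⟫) = ⟪T x, T x⟫ := by
      calc (⟪A x, A x⟫) = ⟪x, ContinuousLinearMap.adjoint A (A x)⟫ := by
            rw [ContinuousLinearMap.adjoint_inner_right]
        _ = ⟪x, A (A x)⟫ := by rw [hAsa.adjoint_eq]
        _ = ⟪x, (A * A) x⟫ := rfl
        _ = ⟪x, (ContinuousLinearMap.adjoint T * T) x⟫ := by rw [hA2]
        _ = ⟪x, ContinuousLinearMap.adjoint T (T x)⟫ := rfl
        _ = ⟪T x, T x⟫ := by rw [ContinuousLinearMap.adjoint_inner_right]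
    have h2 : (‖A x‖:ℝ)^2 = ‖T x‖^2 := by
      rw [inner_self_eq_norm_sq_to_K, inner_self_eq_norm_sq_to_K] at h1
      exact_mod_cast h1
    nlinarith [norm_nonneg (A x), norm_nonneg (T x)]
  have hspec : ∀ z ∈ spectrum ℂ A, z = ((‖T‖ : ℝ) : ℂ) :=
    aux_spectrum_subset A hAsa ‖T‖ hess hpi
  have hspeceq : spectrum ℂ A = {((‖T‖ : ℝ) : ℂ)} := by
    apply Set.eq_singleton_iff_nonempty_unique_mem.mpr
    exact ⟨(spectrum.nonempty A), hspec⟩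
  have hAeq : A = ((‖T‖ : ℝ) : ℂ) • (1 : H →L[ℂ] H) := by
    set C : H →L[ℂ] H := A - ((‖T‖ : ℝ) : ℂ) • (1 : H →L[ℂ] H) with hCdef
    have hCsa : IsSelfAdjoint C := hAsa.sub (aux_smul_one_selfAdjoint ‖T‖)
    have hCspec : spectrum ℂ C = {0} := by
      have h1 : C = A - algebraMap ℂ (H →L[ℂ] H) ((‖T‖ : ℝ) : ℂ) := by
        rw [hCdef, Algebra.algebraMap_eq_smul_one]
      rw [h1, ← spectrum.sub_singleton_eq, hspeceq]
      ext w
      simp [Set.mem_sub]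
    have hrad : spectralRadius ℂ C = 0 := by
      rw [spectralRadius, hCspec]
      simp
    have hCnorm : ‖C‖₊ = 0 := by
      have := hCsa.spectralRadius_eq_nnnorm
      rw [hrad] at this
      exact_mod_cast this.symm
    have hC0 : C = 0 := by
      rwa [nnnorm_eq_zero] at hCnorm
    have := sub_eq_zero.mp hC0
    exact this
  have hTpos : (0:ℝ) < ‖T‖ := norm_pos_iff.mpr hT
  have hnorms : ∀ x : H, ‖T x‖ = ‖T‖ * ‖x‖ := by
    intro x
    rw [← hAx x, hAeq]
    simp [norm_smul]
  refine ⟨⟨((‖T‖ : ℝ) : ℂ)⁻¹ • T, ?_, ?_⟩, hnorms⟩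
  · intro x
    rw [ContinuousLinearMap.smul_apply, norm_smul, hnorms x]
    simp [abs_of_pos hTpos]
    field_simp
  · rw [smul_smul]
    rw [mul_inv_cancel₀ (by exact_mod_cast hTpos.ne')]
    simp
end
end

section
/- Every compact hyponormal operator T on a complex Hilbert space H is normal. -/
noncomputable section

variable {H : Type*} [NormedAddCommGroup H] [InnerProductSpace ℂ H] [CompleteSpace H]

section AuxCompactHyponormal

open ContinuousLinearMap Filter Topology
open scoped InnerProductSpace

variable {E : Type*} [NormedAddCommGroup E] [InnerProductSpace ℂ E] [CompleteSpace E]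

set_option synthInstance.maxHeartbeats 80000 in
private theorem aux_pos_apply_eq_zero {P : E →L[ℂ] E} (hP : P.IsPositive) {x : E}
    (hx : RCLike.re (⟪P x, x⟫_ℂ) = 0) : P x = 0 := by
  have h0 : (0 : E →L[ℂ] E) ≤ P := (ContinuousLinearMap.nonneg_iff_isPositive P).mpr hP
  have hQ2 : CFC.sqrt P * CFC.sqrt P = P := CFC.sqrt_mul_sqrt_self P h0
  set Q := CFC.sqrt P with hQdef
  have hQsa : IsSelfAdjoint Q := IsSelfAdjoint.of_nonneg (CFC.sqrt_nonneg P)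
  have hinner : ⟪P x, x⟫_ℂ = ⟪Q x, Q x⟫_ℂ := by
    conv_lhs => rw [← hQ2]
    rw [ContinuousLinearMap.mul_apply]
    nth_rewrite 1 [← hQsa.adjoint_eq]
    rw [ContinuousLinearMap.adjoint_inner_left]
  have h1 : ‖Q x‖ ^ 2 = 0 := by
    have := inner_self_eq_norm_sq (𝕜 := ℂ) (Q x)
    rw [hinner] at hx
    rw [← this]
    simpa using hx
  have hQx : Q x = 0 := by
    simpa [pow_eq_zero_iff] using h1
  calc P x = Q (Q x) := by rw [← hQ2]; rfl
    _ = 0 := by rw [hQx, map_zero]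

private theorem aux_exists_maximizer (S : E →L[ℂ] E) (hcpt : IsCompactOperator S) (hS0 : S ≠ 0) :
    ∃ x : E, x ≠ 0 ∧ (ContinuousLinearMap.adjoint S ∘L S) x = ((‖S‖ ^ 2 : ℝ) : ℂ) • x := by
  set A : E →L[ℂ] E := ContinuousLinearMap.adjoint S ∘L S with hAdef
  have hM : (0 : ℝ) < ‖S‖ := norm_pos_iff.mpr hS0
  set m : ℝ := ‖S‖ ^ 2 with hmdef
  have hm : 0 < m := by positivity
  have hAnorm : ‖A‖ = m := by rw [hAdef, ContinuousLinearMap.norm_adjoint_comp_self, hmdef, sq]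
  have hre : ∀ x : E, RCLike.re (⟪A x, x⟫_ℂ) = ‖S x‖ ^ 2 := fun x => by
    rw [hAdef, ← ContinuousLinearMap.apply_norm_sq_eq_inner_adjoint_left]
  -- maximizing sequence
  have hseq : ∀ n : ℕ, ∃ x : E, ‖x‖ < 1 ∧ ‖S‖ - ((n : ℝ) + 1)⁻¹ < ‖S x‖ := by
    intro n
    apply S.exists_lt_apply_of_lt_opNorm
    have : (0 : ℝ) < ((n : ℝ) + 1)⁻¹ := by positivity
    linarith
  choose x hx1 hx2 using hseq
  have hxle : ∀ n, ‖x n‖ ≤ 1 := fun n => (hx1 n).le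
  have hSle : ∀ n, ‖S (x n)‖ ≤ ‖S‖ := fun n => by
    calc ‖S (x n)‖ ≤ ‖S‖ * ‖x n‖ := S.le_opNorm _
      _ ≤ ‖S‖ * 1 := by gcongr; exact hxle n
      _ = ‖S‖ := mul_one _
  have htend : Tendsto (fun n => ‖S (x n)‖) atTop (𝓝 ‖S‖) := by
    refine tendsto_of_tendsto_of_tendsto_of_le_of_le (g := fun n : ℕ => ‖S‖ - ((n:ℝ)+1)⁻¹)
      (h := fun _ => ‖S‖) ?_ tendsto_const_nhds (fun n => (hx2 n).le) hSle
    have : Tendsto (fun n : ℕ => ((n : ℝ) + 1)⁻¹) atTop (𝓝 0) :=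
      tendsto_one_div_add_atTop_nhds_zero_nat.congr (by intro n; rw [one_div])
    simpa using tendsto_const_nhds.sub this
  -- ‖A xₙ - m • xₙ‖ → 0
  have hkey : ∀ n, ‖A (x n) - (m : ℂ) • x n‖ ^ 2 ≤ 2 * m ^ 2 - 2 * m * ‖S (x n)‖ ^ 2 := by
    intro n
    have expand : ‖A (x n) - (m : ℂ) • x n‖ ^ 2
        = ‖A (x n)‖ ^ 2 - 2 * (m * ‖S (x n)‖ ^ 2) + m ^ 2 * ‖x n‖ ^ 2 := by
      rw [@norm_sub_sq ℂ, inner_smul_right, norm_smul]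
      simp [RCLike.re_ofReal_mul, hre, Complex.norm_real, abs_of_pos hm]
      ring
    have h1 : ‖A (x n)‖ ≤ m := by
      calc ‖A (x n)‖ ≤ ‖A‖ * ‖x n‖ := A.le_opNorm _
        _ ≤ m * 1 := by rw [hAnorm]; gcongr; exact hxle n
        _ = m := mul_one _
    have h2 : ‖x n‖ ≤ 1 := hxle n
    have h5 : ‖x n‖ ^ 2 ≤ 1 := by
      have := pow_le_one₀ (norm_nonneg (x n)) h2 (n := 2)
      simpa using this
    have h6 : ‖A (x n)‖ ^ 2 ≤ m ^ 2 := by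
      have := pow_le_pow_left₀ (norm_nonneg _) h1 2
      simpa using this
    have h7 : m ^ 2 * ‖x n‖ ^ 2 ≤ m ^ 2 := by
      nlinarith [sq_nonneg m]
    linarith [expand, h6, h7]
  have hbnd : Tendsto (fun n => 2 * m ^ 2 - 2 * m * ‖S (x n)‖ ^ 2) atTop (𝓝 0) := by
    have h2 : Tendsto (fun n => ‖S (x n)‖ ^ 2) atTop (𝓝 m) := by
      simpa [hmdef] using (htend.pow 2)
    have h3 : Tendsto (fun n => 2 * m ^ 2 - 2 * m * ‖S (x n)‖ ^ 2) atTop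
        (𝓝 (2 * m ^ 2 - 2 * m * m)) :=
      (tendsto_const_nhds (x := 2 * m ^ 2) (f := atTop (α := ℕ))).sub (h2.const_mul (2 * m))
    rw [show 2 * m ^ 2 - 2 * m * m = (0:ℝ) by ring] at h3
    exact h3
  have hdiff : Tendsto (fun n => A (x n) - (m : ℂ) • x n) atTop (𝓝 0) := by
    rw [tendsto_zero_iff_norm_tendsto_zero]
    have hsq : Tendsto (fun n => ‖A (x n) - (m : ℂ) • x n‖ ^ 2) atTop (𝓝 0) :=
      squeeze_zero (fun n => sq_nonneg _) hkey hbnd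
    have := hsq.sqrt
    simpa [Real.sqrt_sq (norm_nonneg _)] using this
  -- compactness
  have hAcpt : IsCompactOperator (A : E →ₗ[ℂ] E) := by
    have : IsCompactOperator (⇑(ContinuousLinearMap.adjoint S) ∘ ⇑S) :=
      hcpt.continuous_comp (ContinuousLinearMap.adjoint S).continuous
    simpa [hAdef, Function.comp] using this
  have hKcpt : IsCompact (closure ((A : E →ₗ[ℂ] E) '' Metric.closedBall 0 1)) :=
    hAcpt.isCompact_closure_image_closedBall 1
  have hmem : ∀ n, A (x n) ∈ closure ((A : E →ₗ[ℂ] E) '' Metric.closedBall 0 1) := fun n =>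
    subset_closure ⟨x n, by simpa using hxle n, rfl⟩
  obtain ⟨y, -, φ, hφ, hy⟩ := hKcpt.tendsto_subseq hmem
  -- recover eigenvector
  have hne : (m : ℂ) ≠ 0 := by exact_mod_cast hm.ne'
  have hxconv : Tendsto (fun n => x (φ n)) atTop (𝓝 ((m : ℂ)⁻¹ • y)) := by
    have h1 : Tendsto (fun n => (m : ℂ) • x (φ n)) atTop (𝓝 y) := by
      have := hy.sub ((hdiff.comp hφ.tendsto_atTop))
      simpa using this
    have h2 := h1.const_smul ((m : ℂ)⁻¹)
    exact h2.congr fun n => inv_smul_smul₀ hne _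
  set x₀ : E := (m : ℂ)⁻¹ • y with hx₀
  have hAx₀ : A x₀ = (m : ℂ) • x₀ := by
    have h1 : Tendsto (fun n => A (x (φ n))) atTop (𝓝 (A x₀)) :=
      (A.continuous.tendsto _).comp hxconv
    have h2 : Tendsto (fun n => A (x (φ n))) atTop (𝓝 y) := hy
    have hyx : A x₀ = y := tendsto_nhds_unique h1 h2
    rw [hyx, hx₀, smul_smul, mul_inv_cancel₀ hne, one_smul]
  have hx₀ne : x₀ ≠ 0 := by
    have h1 : Tendsto (fun n => ‖S (x (φ n))‖) atTop (𝓝 ‖S x₀‖) :=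
      ((S.continuous.tendsto _).comp hxconv).norm
    have h2 : Tendsto (fun n => ‖S (x (φ n))‖) atTop (𝓝 ‖S‖) := htend.comp hφ.tendsto_atTop
    have : ‖S x₀‖ = ‖S‖ := tendsto_nhds_unique h1 h2
    intro h
    rw [h] at this
    simp at this
    exact hM.ne' this.symm
  exact ⟨x₀, hx₀ne, hAx₀⟩

private theorem aux_exists_eigenvector [Nontrivial E] (S : E →L[ℂ] E)
    (hcpt : IsCompactOperator S)
    (hypo : ∀ x : E, ‖ContinuousLinearMap.adjoint S x‖ ≤ ‖S x‖) :
    ∃ (c : ℂ) (x : E), x ≠ 0 ∧ S x = c • x := by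
  by_cases hS0 : S = 0
  · obtain ⟨x, hx⟩ := exists_ne (0 : E)
    exact ⟨0, x, hx, by simp [hS0]⟩
  obtain ⟨x₀, hx₀ne, hAx₀⟩ := aux_exists_maximizer S hcpt hS0
  have hM : (0 : ℝ) < ‖S‖ := norm_pos_iff.mpr hS0
  set m : ℝ := ‖S‖ ^ 2 with hmdef
  have hm : 0 < m := by positivity
  set A : E →L[ℂ] E := ContinuousLinearMap.adjoint S ∘L S with hAdef
  have hAsa : IsSelfAdjoint A := by
    rw [ContinuousLinearMap.isSelfAdjoint_iff', hAdef, ContinuousLinearMap.adjoint_comp,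
      ContinuousLinearMap.adjoint_adjoint]
  set P : E →L[ℂ] E := (m : ℂ) • 1 - A with hPdef
  have hPsa : IsSelfAdjoint P := by
    rw [hPdef]
    refine IsSelfAdjoint.sub ?_ hAsa
    rw [IsSelfAdjoint]
    rw [star_smul, star_one, Complex.star_def, Complex.conj_ofReal]
  have hre : ∀ u : E, RCLike.re (⟪A u, u⟫_ℂ) = ‖S u‖ ^ 2 := fun u => by
    rw [hAdef, ← ContinuousLinearMap.apply_norm_sq_eq_inner_adjoint_left]
  have hPre : ∀ u : E, RCLike.re (⟪P u, u⟫_ℂ) = m * ‖u‖ ^ 2 - ‖S u‖ ^ 2 := by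
    intro u
    rw [hPdef]
    simp only [ContinuousLinearMap.sub_apply, ContinuousLinearMap.smul_apply,
      ContinuousLinearMap.one_apply, inner_sub_left, inner_smul_left, map_sub]
    rw [hre u]
    simp [Complex.conj_ofReal, RCLike.re_ofReal_mul, inner_self_eq_norm_sq (𝕜 := ℂ)]
    left; rw [← Complex.ofReal_pow, Complex.ofReal_re]
  have hPpos : P.IsPositive := by
    refine ⟨hPsa.isSymmetric, fun u => ?_⟩
    rw [ContinuousLinearMap.reApplyInnerSelf_apply, hPre]
    have h1 : ‖S u‖ ≤ ‖S‖ * ‖u‖ := S.le_opNorm u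
    nlinarith [norm_nonneg (S u), norm_nonneg u, mul_nonneg (norm_nonneg S) (norm_nonneg u)]
  have hker : ∀ u : E, u ∈ LinearMap.ker (P : E →ₗ[ℂ] E) ↔ ‖S u‖ = ‖S‖ * ‖u‖ := by
    intro u
    constructor
    · intro hu
      have h0 : P u = 0 := hu
      have h1 : RCLike.re (⟪P u, u⟫_ℂ) = 0 := by rw [h0]; simp
      rw [hPre] at h1
      have h2 : ‖S u‖ ^ 2 = (‖S‖ * ‖u‖) ^ 2 := by rw [hmdef] at h1; nlinarith
      have := congrArg Real.sqrt h2
      rwa [Real.sqrt_sq (norm_nonneg _), Real.sqrt_sq (by positivity)] at this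
    · intro hu
      have h1 : RCLike.re (⟪P u, u⟫_ℂ) = 0 := by
        rw [hPre, hu, hmdef]; ring
      exact LinearMap.mem_ker.mpr (aux_pos_apply_eq_zero hPpos h1)
  have hx₀K : x₀ ∈ LinearMap.ker (P : E →ₗ[ℂ] E) := by
    rw [LinearMap.mem_ker, hPdef]
    simp only [ContinuousLinearMap.coe_coe, ContinuousLinearMap.sub_apply, ContinuousLinearMap.smul_apply,
      ContinuousLinearMap.one_apply]
    rw [hAx₀]
    simp [sub_eq_zero]
  -- compactness of A and finite dimensionality of ker P
  have hAcpt : IsCompactOperator (A : E →ₗ[ℂ] E) := by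
    have : IsCompactOperator (⇑(ContinuousLinearMap.adjoint S) ∘ ⇑S) :=
      hcpt.continuous_comp (ContinuousLinearMap.adjoint S).continuous
    simpa [hAdef, Function.comp] using this
  have hC : IsCompact (closure ((A : E →ₗ[ℂ] E) '' Metric.closedBall 0 1)) :=
    hAcpt.isCompact_closure_image_closedBall 1
  have hD : IsCompact ((fun z : E => (m : ℂ)⁻¹ • z) ''
      closure ((A : E →ₗ[ℂ] E) '' Metric.closedBall 0 1)) :=
    hC.image (continuous_const_smul _)
  haveI hfd : FiniteDimensional ℂ (LinearMap.ker (P : E →ₗ[ℂ] E)) := by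
    apply FiniteDimensional.of_isCompact_closedBall₀ ℂ (r := 1) one_pos
    rw [Subtype.isCompact_iff]
    refine IsCompact.of_isClosed_subset hD ?_ ?_
    · have : (Subtype.val '' Metric.closedBall (0 : LinearMap.ker (P : E →ₗ[ℂ] E)) 1)
          = (LinearMap.ker (P : E →ₗ[ℂ] E) : Set E) ∩ Metric.closedBall (0 : E) 1 := by
        ext z
        constructor
        · rintro ⟨⟨w, hw⟩, hw1, rfl⟩
          refine ⟨hw, ?_⟩
          simpa [Metric.mem_closedBall, dist_eq_norm] using hw1
        · rintro ⟨hz, hz1⟩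
          exact ⟨⟨z, hz⟩, by simpa [Metric.mem_closedBall, dist_eq_norm] using hz1, rfl⟩
      rw [this]
      exact IsClosed.inter (ContinuousLinearMap.isClosed_ker P) Metric.isClosed_closedBall
    · rintro z ⟨⟨w, hw⟩, hw1, rfl⟩
      have hzw : P w = 0 := hw
      have hwA : A w = (m : ℂ) • w := by
        have h0 : (m : ℂ) • w - A w = 0 := by simpa [hPdef] using hzw
        exact (sub_eq_zero.mp h0).symm
      refine ⟨A w, subset_closure ⟨w, ?_, rfl⟩, ?_⟩
      · simpa [Metric.mem_closedBall, dist_eq_norm] using hw1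
      · show (↑m : ℂ)⁻¹ • A w = w
        rw [hwA, smul_smul, inv_mul_cancel₀ (show (m:ℂ) ≠ 0 by exact_mod_cast hm.ne'), one_smul]
  haveI : Nontrivial (LinearMap.ker (P : E →ₗ[ℂ] E)) := by
    refine ⟨⟨⟨x₀, hx₀K⟩, 0, ?_⟩⟩
    simp [Subtype.ext_iff, hx₀ne]
  -- S maps ker P into itself
  have hmapsto : ∀ u ∈ LinearMap.ker (P : E →ₗ[ℂ] E), S u ∈ LinearMap.ker (P : E →ₗ[ℂ] E) := by
    intro u hu
    rw [hker] at hu ⊢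
    rcases eq_or_ne u 0 with rfl | hu0
    · simp
    have hupos : 0 < ‖u‖ := norm_pos_iff.mpr hu0
    have hub : ‖S (S u)‖ ≤ ‖S‖ * ‖S u‖ := S.le_opNorm _
    have hlb : ‖S u‖ ^ 2 ≤ ‖S (S u)‖ * ‖u‖ := by
      have h1 : (‖S u‖ : ℝ) ^ 2 = RCLike.re (⟪A u, u⟫_ℂ) := (hre u).symm
      have h2 : RCLike.re (⟪A u, u⟫_ℂ) ≤ ‖A u‖ * ‖u‖ := by
        calc RCLike.re (⟪A u, u⟫_ℂ) ≤ ‖(⟪A u, u⟫_ℂ)‖ := RCLike.re_le_norm _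
          _ ≤ ‖A u‖ * ‖u‖ := norm_inner_le_norm _ _
      have h3 : ‖A u‖ ≤ ‖S (S u)‖ := by
        rw [hAdef]
        exact hypo (S u)
      nlinarith [norm_nonneg u]
    have hge : ‖S‖ * (‖S‖ * ‖u‖) ≤ ‖S (S u)‖ := by
      rw [hu] at hlb
      exact (mul_le_mul_iff_of_pos_right hupos).mp
        (by nlinarith : ‖S‖ * (‖S‖ * ‖u‖) * ‖u‖ ≤ ‖S (S u)‖ * ‖u‖)
    rw [hu] at hub
    rw [hu]
    linarith
  -- restrict S to the finite-dimensional eigenspace and find an eigenvector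
  set g : Module.End ℂ (LinearMap.ker (P : E →ₗ[ℂ] E)) := (S : E →ₗ[ℂ] E).restrict hmapsto with hgdef
  obtain ⟨c, hc⟩ := Module.End.exists_eigenvalue g
  obtain ⟨v, hv⟩ := hc.exists_hasEigenvector
  refine ⟨c, (v : E), by simpa using hv.2, ?_⟩
  have := hv.apply_eq_smul
  have h2 : ((g v : LinearMap.ker (P : E →ₗ[ℂ] E)) : E) = S (v : E) := rfl
  rw [this] at h2
  rw [← h2]
  simp

end AuxCompactHyponormal

open ContinuousLinearMap Filter Topology
open scoped InnerProductSpace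

set_option maxHeartbeats 1000000 in
/-- Every compact hyponormal operator on a complex Hilbert space is normal. -/
theorem compact_hyponormal_normal (T : H →L[ℂ] H)
    (hcpt : IsCompactOperator T) (hhypo : Hyponormal T) :
    ContinuousLinearMap.adjoint T * T = T * ContinuousLinearMap.adjoint T := by
  set D : H →L[ℂ] H := ContinuousLinearMap.adjoint T * T - T * ContinuousLinearMap.adjoint T
    with hDdef
  have hDpos : D.IsPositive := hhypo
  have hTT : ∀ x : H, RCLike.re (⟪(ContinuousLinearMap.adjoint T * T) x, x⟫_ℂ) = ‖T x‖ ^ 2 := by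
    intro x
    rw [show (ContinuousLinearMap.adjoint T * T) x = (ContinuousLinearMap.adjoint T ∘L T) x from rfl,
      ← ContinuousLinearMap.apply_norm_sq_eq_inner_adjoint_left]
  have hTT' : ∀ x : H, RCLike.re (⟪(T * ContinuousLinearMap.adjoint T) x, x⟫_ℂ)
      = ‖ContinuousLinearMap.adjoint T x‖ ^ 2 := by
    intro x
    have h1 : (T * ContinuousLinearMap.adjoint T) x
        = ((ContinuousLinearMap.adjoint (ContinuousLinearMap.adjoint T))
            ∘L (ContinuousLinearMap.adjoint T)) x := by
      rw [ContinuousLinearMap.adjoint_adjoint]; rfl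
    rw [h1, ← ContinuousLinearMap.apply_norm_sq_eq_inner_adjoint_left]
  have hpt : ∀ x : H, ‖ContinuousLinearMap.adjoint T x‖ ≤ ‖T x‖ := by
    intro x
    have h0 := hDpos.2 x
    rw [ContinuousLinearMap.reApplyInnerSelf_apply, hDdef] at h0
    simp only [ContinuousLinearMap.sub_apply, inner_sub_left, map_sub] at h0
    rw [hTT x, hTT' x] at h0
    have : ‖ContinuousLinearMap.adjoint T x‖ ^ 2 ≤ ‖T x‖ ^ 2 := by linarith
    exact (pow_le_pow_iff_left₀ (norm_nonneg _) (norm_nonneg _) two_ne_zero).mp this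
  -- shifted hyponormality
  have hshift : ∀ (c : ℂ) (x : H),
      ‖ContinuousLinearMap.adjoint T x - (starRingEnd ℂ c) • x‖ ≤ ‖T x - c • x‖ := by
    intro c x
    have e1 : ‖T x - c • x‖ ^ 2
        = ‖T x‖ ^ 2 - 2 * RCLike.re (c * ⟪T x, x⟫_ℂ) + ‖c‖ ^ 2 * ‖x‖ ^ 2 := by
      rw [@norm_sub_sq ℂ, inner_smul_right, norm_smul]
      ring
    have e2 : ‖ContinuousLinearMap.adjoint T x - (starRingEnd ℂ c) • x‖ ^ 2
        = ‖ContinuousLinearMap.adjoint T x‖ ^ 2 - 2 * RCLike.re (c * ⟪T x, x⟫_ℂ)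
          + ‖c‖ ^ 2 * ‖x‖ ^ 2 := by
      rw [@norm_sub_sq ℂ, inner_smul_right, norm_smul]
      have h3 : ⟪ContinuousLinearMap.adjoint T x, x⟫_ℂ = starRingEnd ℂ (⟪T x, x⟫_ℂ) := by
        rw [ContinuousLinearMap.adjoint_inner_left, ← inner_conj_symm]
      rw [h3]
      have h4 : RCLike.re ((starRingEnd ℂ c) * starRingEnd ℂ (⟪T x, x⟫_ℂ))
          = RCLike.re (c * ⟪T x, x⟫_ℂ) := by
        rw [← map_mul]
        exact Complex.conj_re _
      rw [h4]
      simp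
      ring
    have hle : ‖ContinuousLinearMap.adjoint T x - (starRingEnd ℂ c) • x‖ ^ 2
        ≤ ‖T x - c • x‖ ^ 2 := by
      rw [e1, e2]
      have := hpt x
      have h5 : ‖ContinuousLinearMap.adjoint T x‖ ^ 2 ≤ ‖T x‖ ^ 2 :=
        pow_le_pow_left₀ (norm_nonneg _) this 2
      linarith
    exact (pow_le_pow_iff_left₀ (norm_nonneg _) (norm_nonneg _) two_ne_zero).mp hle
  -- eigenvectors are joint eigenvectors and lie in ker D
  have hadj_eig : ∀ (c : ℂ) (x : H), T x = c • x →
      ContinuousLinearMap.adjoint T x = (starRingEnd ℂ c) • x := by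
    intro c x hx
    have := hshift c x
    rw [hx, sub_self, norm_zero] at this
    have h0 : ‖ContinuousLinearMap.adjoint T x - (starRingEnd ℂ c) • x‖ = 0 :=
      le_antisymm this (norm_nonneg _)
    rw [norm_eq_zero, sub_eq_zero] at h0
    exact h0
  have hDeig : ∀ (c : ℂ) (x : H), T x = c • x → D x = 0 := by
    intro c x hx
    rw [hDdef]
    simp only [ContinuousLinearMap.sub_apply, ContinuousLinearMap.mul_apply]
    rw [hx, hadj_eig c x hx, map_smul, map_smul, hx, hadj_eig c x hx, smul_smul, smul_smul,
      mul_comm]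
    simp [sub_self]
  -- the closed span of eigenvectors
  set Esub : Submodule ℂ H := ⨆ c : ℂ, LinearMap.ker ((T - c • (1 : H →L[ℂ] H) : H →L[ℂ] H) : H →ₗ[ℂ] H) with hEdef
  have heig : ∀ (c : ℂ) (x : H), x ∈ LinearMap.ker ((T - c • (1 : H →L[ℂ] H) : H →L[ℂ] H) : H →ₗ[ℂ] H) ↔ T x = c • x := by
    intro c x
    rw [LinearMap.mem_ker]
    constructor
    · intro h
      have : T x - c • x = 0 := by
        simpa [ContinuousLinearMap.sub_apply] using h
      exact sub_eq_zero.mp this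
    · intro h
      show T x - c • x = 0
      rw [h, sub_self]
  have hEker : Esub ≤ LinearMap.ker (D : H →ₗ[ℂ] H) := by
    refine iSup_le fun c x hx => ?_
    rw [heig] at hx
    exact LinearMap.mem_ker.mpr (hDeig c x hx)
  have hET : ∀ x ∈ Esub, T x ∈ Esub := by
    intro x hx
    refine Submodule.iSup_induction _ (motive := fun y => T y ∈ Esub) hx (fun c y hy => ?_) (by simp) ?_
    · have hy' := (heig c y).mp hy
      have : T (T y) = c • T y := by rw [hy', map_smul, hy']
      exact le_iSup (fun c => LinearMap.ker ((T - c • (1 : H →L[ℂ] H) : H →L[ℂ] H) : H →ₗ[ℂ] H)) c ((heig c (T y)).mpr this)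
    · intro a b ha hb
      rw [map_add]
      exact Submodule.add_mem _ ha hb
  have hET' : ∀ x ∈ Esub, ContinuousLinearMap.adjoint T x ∈ Esub := by
    intro x hx
    refine Submodule.iSup_induction _ (motive := fun y => ContinuousLinearMap.adjoint T y ∈ Esub) hx
      (fun c y hy => ?_) (by simp) ?_
    · have hy' := (heig c y).mp hy
      have h1 : ContinuousLinearMap.adjoint T y = (starRingEnd ℂ c) • y := hadj_eig c y hy'
      show ContinuousLinearMap.adjoint T y ∈ Esub
      rw [h1]
      exact Submodule.smul_mem _ _ (le_iSup (fun c => LinearMap.ker ((T - c • (1 : H →L[ℂ] H) : H →L[ℂ] H) : H →ₗ[ℂ] H)) c hy)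
    · intro a b ha hb
      rw [map_add]
      exact Submodule.add_mem _ ha hb
  set M : Submodule ℂ H := Esub.topologicalClosure with hMdef
  have hMcoe : (M : Set H) = closure (Esub : Set H) := Submodule.topologicalClosure_coe Esub
  have hMT : ∀ x ∈ M, T x ∈ M := by
    intro x hx
    have hmaps : Set.MapsTo T (Esub : Set H) (Esub : Set H) := fun y hy => hET y hy
    have hcl := hmaps.closure T.continuous
    have hxc : x ∈ closure (Esub : Set H) := by rw [← hMcoe]; exact hx
    have : T x ∈ closure (Esub : Set H) := hcl hxc
    rwa [← SetLike.mem_coe, hMcoe]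
  have hMT' : ∀ x ∈ M, ContinuousLinearMap.adjoint T x ∈ M := by
    intro x hx
    have hmaps : Set.MapsTo (ContinuousLinearMap.adjoint T) (Esub : Set H) (Esub : Set H) :=
      fun y hy => hET' y hy
    have hcl := hmaps.closure (ContinuousLinearMap.adjoint T).continuous
    have hxc : x ∈ closure (Esub : Set H) := by rw [← hMcoe]; exact hx
    have : ContinuousLinearMap.adjoint T x ∈ closure (Esub : Set H) := hcl hxc
    rwa [← SetLike.mem_coe, hMcoe]
  have hMD : M ≤ LinearMap.ker (D : H →ₗ[ℂ] H) :=
    Submodule.topologicalClosure_minimal Esub hEker (ContinuousLinearMap.isClosed_ker D)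
  -- the orthogonal complement
  set N : Submodule ℂ H := Mᗮ with hNdef
  have hNT : ∀ x ∈ N, T x ∈ N := by
    intro x hx
    rw [Submodule.mem_orthogonal] at hx ⊢
    intro y hy
    rw [← ContinuousLinearMap.adjoint_inner_left]
    exact hx _ (hMT' y hy)
  have hNT' : ∀ x ∈ N, ContinuousLinearMap.adjoint T x ∈ N := by
    intro x hx
    rw [hNdef, Submodule.mem_orthogonal] at hx ⊢
    intro y hy
    rw [ContinuousLinearMap.adjoint_inner_right]
    exact hx _ (hMT y hy)
  have hNbot : N = ⊥ := by
    by_contra hne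
    haveI : Nontrivial N := Submodule.nontrivial_iff_ne_bot.mpr hne
    haveI : CompleteSpace N := M.isClosed_orthogonal.completeSpace_coe
    set S : N →L[ℂ] N := (T.comp N.subtypeL).codRestrict N (fun u => hNT _ u.2) with hSdef
    have hScpt : IsCompactOperator S := by
      have h1 : IsCompactOperator (⇑T ∘ ⇑(N.subtypeL)) := hcpt.comp_clm N.subtypeL
      exact h1.codRestrict (fun u => hNT _ u.2) M.isClosed_orthogonal
    set S' : N →L[ℂ] N := ((ContinuousLinearMap.adjoint T).comp N.subtypeL).codRestrict N
      (fun u => hNT' _ u.2) with hS'def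
    have hadjS : ContinuousLinearMap.adjoint S = S' := by
      symm
      rw [ContinuousLinearMap.eq_adjoint_iff]
      intro x y
      rw [Submodule.coe_inner, Submodule.coe_inner]
      show ⟪(ContinuousLinearMap.adjoint T) (x : H), (y : H)⟫_ℂ = ⟪(x : H), T (y : H)⟫_ℂ
      rw [ContinuousLinearMap.adjoint_inner_left]
    have hypoS : ∀ u : N, ‖ContinuousLinearMap.adjoint S u‖ ≤ ‖S u‖ := by
      intro u
      have h1 : ‖ContinuousLinearMap.adjoint S u‖
          = ‖ContinuousLinearMap.adjoint T (u : H)‖ := by rw [hadjS]; rfl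
      have h2 : ‖S u‖ = ‖T (u : H)‖ := rfl
      rw [h1, h2]
      exact hpt _
    obtain ⟨c, u, hu0, hSu⟩ := aux_exists_eigenvector S hScpt hypoS
    have hTu : T (u : H) = c • (u : H) := by
      have := congrArg (Subtype.val) hSu
      exact this
    have huE : (u : H) ∈ Esub :=
      le_iSup (fun c => LinearMap.ker ((T - c • (1 : H →L[ℂ] H) : H →L[ℂ] H) : H →ₗ[ℂ] H)) c ((heig c _).mpr hTu)
    have huM : (u : H) ∈ M := Esub.le_topologicalClosure huE
    have huN : (u : H) ∈ Mᗮ := u.2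
    have hzero : (u : H) = 0 := by
      rw [Submodule.mem_orthogonal] at huN
      exact inner_self_eq_zero.mp (huN _ huM)
    exact hu0 (Submodule.coe_eq_zero.mp hzero)
  have hMtop : M = ⊤ := by
    haveI : CompleteSpace M := Esub.isClosed_topologicalClosure.completeSpace_coe
    exact Submodule.orthogonal_eq_bot_iff.mp hNbot
  have hkerD : LinearMap.ker (D : H →ₗ[ℂ] H) = ⊤ := top_unique (hMtop ▸ hMD)
  have hD0 : D = 0 := by
    ext x
    have hx : x ∈ LinearMap.ker (D : H →ₗ[ℂ] H) := by
      rw [hkerD]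
      exact Submodule.mem_top
    rw [ContinuousLinearMap.zero_apply]
    exact LinearMap.mem_ker.mp hx
  exact sub_eq_zero.mp hD0
end
end
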